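/- arXiv:1310.3771 — 4 statements merged into one kernel-verified Lean document; each statement's English description precedes it below -/
import Mathlib

section
/- Let M_HL denote the uncentered Hardy–Littlewood maximal operator on ℝ (taken over open bounded intervals). Let E ⊆ ℝ be a measurable set with |E| < ∞ and let 0 ≤ γ < α < 1. Then |{x ∈ ℝ : M_HL(χ_E + γ·χ_{E^c})(x) > α}| ≤ (1 + 4(1−α)/(α−γ))·|E|. -/
open MeasureTheory Set Filter
open scoped ENNReal

/-- The uncentered Hardy–Littlewood maximal operator on `ℝ`, taken over
open bounded intervals containing the point. -/
noncomputable def MHL (f : ℝ → ℝ≥0∞) (x : ℝ) : ℝ≥0∞ :=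
  ⨆ (a : ℝ) (b : ℝ) (_ : a < x) (_ : x < b),
    (∫⁻ y in Set.Ioo a b, f y) / volume (Set.Ioo a b)

lemma ioo_subset_union {a1 b1 a2 b2 a3 b3 y : ℝ}
    (h2 : y ∈ Ioo a2 b2) (h3 : y ∈ Ioo a3 b3) (ha : a2 ≤ a1) (hb : b1 ≤ b3) :
    Ioo a1 b1 ⊆ Ioo a2 b2 ∪ Ioo a3 b3 := by
  intro z hz
  rcases le_or_gt z y with h | h
  · exact Or.inl ⟨lt_of_le_of_lt ha hz.1, lt_of_le_of_lt h h2.2⟩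
  · exact Or.inr ⟨lt_trans h3.1 h, lt_of_lt_of_le hz.2 hb⟩

lemma three_intervals {a1 b1 a2 b2 a3 b3 y : ℝ}
    (h1 : y ∈ Ioo a1 b1) (h2 : y ∈ Ioo a2 b2) (h3 : y ∈ Ioo a3 b3) :
    Ioo a1 b1 ⊆ Ioo a2 b2 ∪ Ioo a3 b3 ∨ Ioo a2 b2 ⊆ Ioo a1 b1 ∪ Ioo a3 b3 ∨
      Ioo a3 b3 ⊆ Ioo a1 b1 ∪ Ioo a2 b2 := by
  rcases le_total a1 a2 with ha12 | ha12 <;> rcases le_total a1 a3 with ha13 | ha13 <;>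
    rcases le_total a2 a3 with ha23 | ha23 <;> rcases le_total b1 b2 with hb12 | hb12 <;>
    rcases le_total b1 b3 with hb13 | hb13 <;> rcases le_total b2 b3 with hb23 | hb23 <;>
  first
    | exact Or.inl (ioo_subset_union h2 h3 (by linarith) (by linarith))
    | exact Or.inl ((union_comm (Ioo a2 b2) (Ioo a3 b3)) ▸
        ioo_subset_union h3 h2 (by linarith) (by linarith))
    | exact Or.inr (Or.inl (ioo_subset_union h1 h3 (by linarith) (by linarith)))
    | exact Or.inr (Or.inl ((union_comm (Ioo a1 b1) (Ioo a3 b3)) ▸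
        ioo_subset_union h3 h1 (by linarith) (by linarith)))
    | exact Or.inr (Or.inr (ioo_subset_union h1 h2 (by linarith) (by linarith)))
    | exact Or.inr (Or.inr ((union_comm (Ioo a1 b1) (Ioo a2 b2)) ▸
        ioo_subset_union h2 h1 (by linarith) (by linarith)))

lemma interval_est (E : Set ℝ) (hE : MeasurableSet E)
    (γ α : ℝ) (hγ : 0 ≤ γ) (hγα : γ < α) (hα : α < 1) {a b : ℝ} (hab : a < b)
    (h : ENNReal.ofReal α <
      (∫⁻ y in Set.Ioo a b,
        (E.indicator 1 y + ENNReal.ofReal γ * Eᶜ.indicator 1 y)) / volume (Set.Ioo a b)) :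
    volume (Ioo a b \ E) ≤ ENNReal.ofReal ((1 - α) / (α - γ)) * volume (Ioo a b ∩ E) := by
  have hvol : volume (Ioo a b) = ENNReal.ofReal (b - a) := by simp [Real.volume_Ioo]
  have hvol0 : volume (Ioo a b) ≠ 0 := by
    simp [hvol, ENNReal.ofReal_eq_zero]; linarith
  have hvolt : volume (Ioo a b) ≠ ⊤ := by simp [hvol]
  have hint : (∫⁻ y in Set.Ioo a b,
      (E.indicator 1 y + ENNReal.ofReal γ * Eᶜ.indicator 1 y))
      = volume (Ioo a b ∩ E) + ENNReal.ofReal γ * volume (Ioo a b \ E) := by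
    rw [lintegral_add_left (measurable_one.indicator hE : Measurable (E.indicator (1 : ℝ → ℝ≥0∞)))]
    rw [lintegral_const_mul _ (measurable_one.indicator hE.compl : Measurable (Eᶜ.indicator (1 : ℝ → ℝ≥0∞)))]
    rw [lintegral_indicator_one hE, lintegral_indicator_one hE.compl,
      Measure.restrict_apply hE, Measure.restrict_apply hE.compl]
    rw [Set.inter_comm E, Set.inter_comm Eᶜ, ← Set.diff_eq]
  rw [hint] at h
  have h' := (ENNReal.lt_div_iff_mul_lt (Or.inl hvol0) (Or.inl hvolt)).mp h
  rw [← measure_inter_add_diff (Ioo a b) hE] at h'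
  set e := volume (Ioo a b ∩ E) with hedef
  set d := volume (Ioo a b \ E) with hddef
  have he : e ≠ ⊤ := (lt_of_le_of_lt (measure_mono Set.inter_subset_left)
    (lt_of_le_of_lt le_rfl (lt_top_iff_ne_top.mpr hvolt))).ne
  have hd : d ≠ ⊤ := (lt_of_le_of_lt (measure_mono Set.diff_subset)
    (lt_top_iff_ne_top.mpr hvolt)).ne
  rw [← ENNReal.ofReal_toReal he, ← ENNReal.ofReal_toReal hd] at h' ⊢
  set E' := e.toReal
  set D := d.toReal
  have hE0 : 0 ≤ E' := ENNReal.toReal_nonneg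
  have hD0 : 0 ≤ D := ENNReal.toReal_nonneg
  rw [← ENNReal.ofReal_add hE0 hD0, ← ENNReal.ofReal_mul (by linarith),
    ← ENNReal.ofReal_mul hγ, ← ENNReal.ofReal_add hE0 (by positivity)] at h'
  have hr : α * (E' + D) < E' + γ * D :=
    lt_of_lt_of_le ((ENNReal.ofReal_lt_ofReal_iff_of_nonneg
      (by nlinarith)).mp h') le_rfl
  rw [← ENNReal.ofReal_mul (div_nonneg (by linarith) (by linarith))]
  refine ENNReal.ofReal_le_ofReal ?_
  rw [div_mul_eq_mul_div, le_div_iff₀ (by linarith)]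
  nlinarith

theorem solyanik_one_dim (E : Set ℝ) (hE : MeasurableSet E) (hEfin : volume E < ⊤)
    (γ α : ℝ) (hγ : 0 ≤ γ) (hγα : γ < α) (hα : α < 1) :
    volume {x : ℝ |
        MHL (fun y => E.indicator 1 y + ENNReal.ofReal γ * Eᶜ.indicator 1 y) x
          > ENNReal.ofReal α}
      ≤ ENNReal.ofReal (1 + 4 * (1 - α) / (α - γ)) * volume E := by
  classical
  set c := (1 - α) / (α - γ) with hc
  have hc0 : 0 ≤ c := div_nonneg (by linarith) (by linarith)
  set f : ℝ → ℝ≥0∞ := fun y => E.indicator 1 y + ENNReal.ofReal γ * Eᶜ.indicator 1 y with hf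
  set U := {x : ℝ | MHL f x > ENNReal.ofReal α} with hUdef
  have hwit : ∀ x ∈ U, ∃ a b : ℝ, x ∈ Ioo a b ∧ Ioo a b ⊆ U ∧
      volume (Ioo a b \ E) ≤ ENNReal.ofReal c * volume (Ioo a b ∩ E) := by
    intro x hx
    have hx' : ENNReal.ofReal α < MHL f x := hx
    rw [MHL] at hx'
    simp only [lt_iSup_iff] at hx'
    obtain ⟨a, b, h1, h2, hlt⟩ := hx'
    refine ⟨a, b, ⟨h1, h2⟩, ?_, interval_est E hE γ α hγ hγα hα (h1.trans h2) hlt⟩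
    intro y hy
    have : ENNReal.ofReal α < MHL f y := by
      refine lt_of_lt_of_le hlt ?_
      rw [MHL]
      exact le_iSup_of_le a (le_iSup_of_le b (le_iSup_of_le hy.1 (le_iSup_of_le hy.2 le_rfl)))
    exact this
  have hUopen : IsOpen U := by
    rw [isOpen_iff_mem_nhds]
    intro x hx
    obtain ⟨a, b, hm, hsub, -⟩ := hwit x hx
    exact Filter.mem_of_superset (Ioo_mem_nhds hm.1 hm.2) hsub
  have hbound : ∀ K : Set ℝ, IsCompact K → K ⊆ U →
      volume K ≤ volume E + ENNReal.ofReal c * (2 * volume E) := by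
    intro K hK hKU
    have hch : ∀ i : K, ∃ a b : ℝ, (i : ℝ) ∈ Ioo a b ∧ Ioo a b ⊆ U ∧
        volume (Ioo a b \ E) ≤ ENNReal.ofReal c * volume (Ioo a b ∩ E) :=
      fun i => hwit i (hKU i.2)
    choose A B hmem hsubU hkey using hch
    have hcov : K ⊆ ⋃ i : K, Ioo (A i) (B i) := fun x hx =>
      mem_iUnion.mpr ⟨⟨x, hx⟩, hmem ⟨x, hx⟩⟩
    obtain ⟨t0, ht0⟩ := hK.elim_finite_subcover (fun i : K => Ioo (A i) (B i))
      (fun i => isOpen_Ioo) hcov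
    have hPex : ∃ n : ℕ, ∃ t : Finset K, t.card = n ∧ K ⊆ ⋃ i ∈ t, Ioo (A i) (B i) :=
      ⟨t0.card, t0, rfl, ht0⟩
    obtain ⟨t, htcard, htcov⟩ := Nat.find_spec hPex
    -- multiplicity at most 2
    have hmult : ∀ y : ℝ, (t.filter fun i => y ∈ Ioo (A i) (B i)).card ≤ 2 := by
      intro y
      by_contra hgt
      push_neg at hgt
      obtain ⟨i, hi, j, hj, k, hk, hij, hik, hjk⟩ := Finset.two_lt_card.mp hgt
      simp only [Finset.mem_filter] at hi hj hk
      have herase : ∀ l ∈ t, ∀ m ∈ t, ∀ p ∈ t, m ≠ l → p ≠ l →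
          Ioo (A l) (B l) ⊆ Ioo (A m) (B m) ∪ Ioo (A p) (B p) → False := by
        intro l hl m hm p hp hml hpl hsub
        have hcover : K ⊆ ⋃ i ∈ t.erase l, Ioo (A i) (B i) := by
          intro z hz
          obtain ⟨q, hq, hzq⟩ := Set.mem_iUnion₂.mp (htcov hz)
          by_cases hql : q = l
          · subst hql
            rcases hsub hzq with h | h
            · exact Set.mem_biUnion (Finset.mem_erase.mpr ⟨hml, hm⟩) h
            · exact Set.mem_biUnion (Finset.mem_erase.mpr ⟨hpl, hp⟩) h
          · exact Set.mem_biUnion (Finset.mem_erase.mpr ⟨hql, hq⟩) hzq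
        exact Nat.find_min hPex (htcard ▸ Finset.card_erase_lt_of_mem hl)
          ⟨t.erase l, rfl, hcover⟩
      rcases three_intervals hi.2 hj.2 hk.2 with hsub | hsub | hsub
      · exact herase i hi.1 j hj.1 k hk.1 hij.symm hik.symm hsub
      · exact herase j hj.1 i hi.1 k hk.1 hij hjk.symm hsub
      · exact herase k hk.1 i hi.1 j hj.1 hik hjk hsub
    -- sum of measures of intersections bounded by 2 * volume E
    have hsum : ∑ i ∈ t, volume (Ioo (A i) (B i) ∩ E) ≤ 2 * volume E := by
      have hpt : ∀ y : ℝ, ∑ i ∈ t, (Ioo (A i) (B i) ∩ E).indicator (1 : ℝ → ℝ≥0∞) y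
          ≤ 2 * E.indicator (1 : ℝ → ℝ≥0∞) y := by
        intro y
        by_cases hy : y ∈ E
        · calc ∑ i ∈ t, (Ioo (A i) (B i) ∩ E).indicator (1 : ℝ → ℝ≥0∞) y
              = ∑ i ∈ t, if y ∈ Ioo (A i) (B i) then (1 : ℝ≥0∞) else 0 := by
                refine Finset.sum_congr rfl fun i _ => ?_
                simp [Set.indicator_apply, Set.mem_inter_iff, hy]
            _ = ((t.filter fun i => y ∈ Ioo (A i) (B i)).card : ℝ≥0∞) := by
                rw [Finset.sum_boole]
            _ ≤ (2 : ℝ≥0∞) := by exact_mod_cast Nat.cast_le.mpr (hmult y)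
            _ = 2 * E.indicator (1 : ℝ → ℝ≥0∞) y := by simp [Set.indicator_of_mem hy]
        · have : ∀ i ∈ t, (Ioo (A i) (B i) ∩ E).indicator (1 : ℝ → ℝ≥0∞) y = 0 :=
            fun i _ => Set.indicator_of_notMem (fun h => hy h.2) _
          rw [Finset.sum_congr rfl this]
          simp
      calc ∑ i ∈ t, volume (Ioo (A i) (B i) ∩ E)
          = ∑ i ∈ t, ∫⁻ y, (Ioo (A i) (B i) ∩ E).indicator (1 : ℝ → ℝ≥0∞) y := by
            refine Finset.sum_congr rfl fun i _ => ?_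
            rw [lintegral_indicator_one (measurableSet_Ioo.inter hE)]
        _ = ∫⁻ y, ∑ i ∈ t, (Ioo (A i) (B i) ∩ E).indicator (1 : ℝ → ℝ≥0∞) y :=
            (lintegral_finset_sum _ (fun i _ =>
              measurable_one.indicator (measurableSet_Ioo.inter hE))).symm
        _ ≤ ∫⁻ y, 2 * E.indicator (1 : ℝ → ℝ≥0∞) y := lintegral_mono hpt
        _ = 2 * volume E := by
            rw [lintegral_const_mul _ (measurable_one.indicator hE : Measurable (E.indicator (1 : ℝ → ℝ≥0∞))),
              lintegral_indicator_one hE]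
    calc volume K = volume (K ∩ E) + volume (K \ E) := (measure_inter_add_diff K hE).symm
      _ ≤ volume E + volume ((⋃ i ∈ t, Ioo (A i) (B i)) \ E) :=
          add_le_add (measure_mono Set.inter_subset_right)
            (measure_mono (Set.diff_subset_diff_left htcov))
      _ ≤ volume E + ∑ i ∈ t, volume (Ioo (A i) (B i) \ E) := by
          refine add_le_add_right ?_ _
          rw [Set.iUnion_diff]
          refine le_trans (measure_mono ?_) (measure_biUnion_finset_le t _)
          intro z hz
          simp only [Set.mem_iUnion] at hz ⊢
          obtain ⟨i, hi⟩ := hz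
          rw [Set.iUnion_diff] at hi
          simp only [Set.mem_iUnion] at hi
          obtain ⟨hit, hzi⟩ := hi
          exact ⟨i, hit, hzi⟩
      _ ≤ volume E + ∑ i ∈ t, ENNReal.ofReal c * volume (Ioo (A i) (B i) ∩ E) :=
          add_le_add_right (Finset.sum_le_sum fun i _ => hkey i) _
      _ = volume E + ENNReal.ofReal c * ∑ i ∈ t, volume (Ioo (A i) (B i) ∩ E) := by
          rw [Finset.mul_sum]
      _ ≤ volume E + ENNReal.ofReal c * (2 * volume E) :=
          add_le_add_right (mul_le_mul_right hsum _) _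
  have hfinal : volume U ≤ volume E + ENNReal.ofReal c * (2 * volume E) := by
    rw [hUopen.measure_eq_iSup_isCompact]
    exact iSup_le fun K => iSup_le fun h1 => iSup_le fun h2 => hbound K h2 h1
  refine le_trans hfinal ?_
  have h4 : 0 ≤ 4 * (1 - α) / (α - γ) := div_nonneg (by linarith) (by linarith)
  calc volume E + ENNReal.ofReal c * (2 * volume E)
      = (1 + ENNReal.ofReal c * 2) * volume E := by ring
    _ ≤ ENNReal.ofReal (1 + 4 * (1 - α) / (α - γ)) * volume E := by
        refine mul_le_mul_left ?_ _
        rw [ENNReal.ofReal_add (by norm_num) h4, ENNReal.ofReal_one]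
        refine add_le_add_right ?_ 1
        rw [show (2 : ℝ≥0∞) = ENNReal.ofReal 2 by simp, ← ENNReal.ofReal_mul hc0]
        refine ENNReal.ofReal_le_ofReal ?_
        rw [hc, div_mul_eq_mul_div]
        have hαγ : (0:ℝ) < α - γ := by linarith
        rw [div_le_div_iff₀ hαγ hαγ]
        nlinarith
end

section
/- Fix an integer n ≥ 1 and 0 < α₁ < 1, and define α_j = 1 − (1 − α₁)^j for j = 1, …, n. Then for every measurable set E ⊆ ℝⁿ, |{x ∈ ℝⁿ : M₁⋯M_n χ_E(x) > α_n}| ≤ (1 + 4(1−α₁)/α₁)^n · |E|. -/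
open MeasureTheory Set Filter
open scoped ENNReal

/-- The directional maximal operator `M_j` on `ℝⁿ`, averaging over segments
in the `j`-th coordinate direction. -/
noncomputable def dirMax {n : ℕ} (j : Fin n) (f : (Fin n → ℝ) → ℝ≥0∞)
    (x : Fin n → ℝ) : ℝ≥0∞ :=
  ⨆ (s : ℝ) (t : ℝ) (_ : s < x j) (_ : x j < t),
    (∫⁻ u in Set.Ioo s t, f (Function.update x j u)) / ENNReal.ofReal (t - s)

/-- The iterated maximal operator `M₁ M₂ ⋯ M_n`. -/
noncomputable def iterMax (n : ℕ) (f : (Fin n → ℝ) → ℝ≥0∞) : (Fin n → ℝ) → ℝ≥0∞ :=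
  (List.finRange n).foldr (fun j g => dirMax j g) f

lemma three_intervals_s1 {a₁ b₁ a₂ b₂ a₃ b₃ x : ℝ}
    (h₁ : x ∈ Ioo a₁ b₁) (h₂ : x ∈ Ioo a₂ b₂) (h₃ : x ∈ Ioo a₃ b₃) :
    Ioo a₁ b₁ ⊆ Ioo a₂ b₂ ∪ Ioo a₃ b₃ ∨ Ioo a₂ b₂ ⊆ Ioo a₁ b₁ ∪ Ioo a₃ b₃ ∨
    Ioo a₃ b₃ ⊆ Ioo a₁ b₁ ∪ Ioo a₂ b₂ := by
  obtain ⟨ha₁, hb₁⟩ := h₁; obtain ⟨ha₂, hb₂⟩ := h₂; obtain ⟨ha₃, hb₃⟩ := h₃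
  -- a point y in any of the intervals lies in the one with min left endpoint
  -- (if y ≤ x) or the one with max right endpoint (if y ≥ x).
  rcases le_total a₁ a₂ with h12 | h12 <;> rcases le_total a₁ a₃ with h13 | h13 <;>
    rcases le_total a₂ a₃ with h23 | h23 <;>
    rcases le_total b₁ b₂ with g12 | g12 <;> rcases le_total b₁ b₃ with g13 | g13 <;>
    rcases le_total b₂ b₃ with g23 | g23 <;>
    [skip; skip; skip; skip; skip; skip; skip; skip; skip; skip; skip; skip;
     skip; skip; skip; skip; skip; skip; skip; skip; skip; skip; skip; skip;
     skip; skip; skip; skip; skip; skip; skip; skip; skip; skip; skip; skip;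
     skip; skip; skip; skip; skip; skip; skip; skip; skip; skip; skip; skip;
     skip; skip; skip; skip; skip; skip; skip; skip; skip; skip; skip; skip;
     skip; skip; skip; skip] <;>
  · first
    | (left; intro y ⟨hy1, hy2⟩; rcases le_total y x with hyx | hyx
       · first | (left; exact ⟨by linarith, by linarith⟩) | (right; exact ⟨by linarith, by linarith⟩)
       · first | (left; exact ⟨by linarith, by linarith⟩) | (right; exact ⟨by linarith, by linarith⟩))
    | (right; left; intro y ⟨hy1, hy2⟩; rcases le_total y x with hyx | hyx
       · first | (left; exact ⟨by linarith, by linarith⟩) | (right; exact ⟨by linarith, by linarith⟩)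
       · first | (left; exact ⟨by linarith, by linarith⟩) | (right; exact ⟨by linarith, by linarith⟩))
    | (right; right; intro y ⟨hy1, hy2⟩; rcases le_total y x with hyx | hyx
       · first | (left; exact ⟨by linarith, by linarith⟩) | (right; exact ⟨by linarith, by linarith⟩)
       · first | (left; exact ⟨by linarith, by linarith⟩) | (right; exact ⟨by linarith, by linarith⟩))

lemma subcover_mult_two {ι : Type*} [DecidableEq ι] (a b : ι → ℝ) :
    ∀ (s : Finset ι) (K : Set ℝ), K ⊆ (⋃ i ∈ s, Ioo (a i) (b i)) →
    ∃ t ⊆ s, K ⊆ (⋃ i ∈ t, Ioo (a i) (b i)) ∧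
      ∀ x : ℝ, ((t.filter (fun i => x ∈ Ioo (a i) (b i))).card ≤ 2) := by
  intro s
  induction s using Finset.strongInduction with
  | _ s ih =>
    intro K hK
    by_cases hmult : ∀ x : ℝ, (s.filter (fun i => x ∈ Ioo (a i) (b i))).card ≤ 2
    · exact ⟨s, le_refl s, hK, hmult⟩
    · push_neg at hmult
      obtain ⟨x, hx⟩ := hmult
      rw [Nat.lt_iff_add_one_le] at hx
      obtain ⟨i, j, k, hi, hj, hk, hij, hik, hjk⟩ := Finset.two_lt_card_iff.mp hx
      simp only [Finset.mem_filter] at hi hj hk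
      have key : ∀ p q r : ι, p ∈ s → q ∈ s → r ∈ s → q ≠ p → r ≠ p →
          Ioo (a p) (b p) ⊆ Ioo (a q) (b q) ∪ Ioo (a r) (b r) →
          ∃ t ⊆ s, K ⊆ (⋃ i ∈ t, Ioo (a i) (b i)) ∧
            ∀ y : ℝ, ((t.filter (fun i => y ∈ Ioo (a i) (b i))).card ≤ 2) := by
        intro p q r hp hq hr hqp hrp hsub
        have hcov : K ⊆ ⋃ l ∈ s.erase p, Ioo (a l) (b l) := by
          intro y hy
          obtain ⟨l, hl, hyl⟩ := Set.mem_iUnion₂.mp (hK hy)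
          by_cases hlp : l = p
          · subst hlp
            rcases hsub hyl with h | h
            · exact Set.mem_biUnion (Finset.mem_erase.mpr ⟨hqp, hq⟩) h
            · exact Set.mem_biUnion (Finset.mem_erase.mpr ⟨hrp, hr⟩) h
          · exact Set.mem_biUnion (Finset.mem_erase.mpr ⟨hlp, hl⟩) hyl
        obtain ⟨t, ht, h1, h2⟩ := ih (s.erase p) (Finset.erase_ssubset hp) K hcov
        exact ⟨t, ht.trans (Finset.erase_subset _ _), h1, h2⟩
      rcases three_intervals_s1 hi.2 hj.2 hk.2 with h | h | h
      · exact key i j k hi.1 hj.1 hk.1 hij.symm hik.symm h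
      · exact key j i k hj.1 hi.1 hk.1 hij hjk.symm h
      · exact key k i j hk.1 hi.1 hj.1 hik hjk h

noncomputable def m1 (F : Set ℝ) (v : ℝ) : ℝ≥0∞ :=
  ⨆ (s : ℝ) (t : ℝ) (_ : s < v) (_ : v < t),
    volume (F ∩ Ioo s t) / ENNReal.ofReal (t - s)

lemma interval_bound {F : Set ℝ} (hF : MeasurableSet F) {α s t : ℝ}
    (hα : 0 < α) (hα1 : α ≤ 1) (hst : s < t)
    (h : ENNReal.ofReal α * ENNReal.ofReal (t - s) < volume (F ∩ Ioo s t)) :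
    volume (Ioo s t \ F) ≤ ENNReal.ofReal ((1 - α)/α) * volume (F ∩ Ioo s t) := by
  have hsub : Ioo s t ∩ F ⊆ Ioo s t := inter_subset_left
  have hfin : volume (F ∩ Ioo s t) ≠ ∞ :=
    ((measure_mono inter_subset_right).trans_lt (by simp [Real.volume_Ioo])).ne
  have hdiff : Ioo s t \ F = Ioo s t \ (Ioo s t ∩ F) := (Set.diff_self_inter).symm
  rw [hdiff, measure_diff hsub (measurableSet_Ioo.inter hF).nullMeasurableSet
    (((measure_mono hsub).trans_lt (by simp [Real.volume_Ioo])).ne)]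
  rw [Set.inter_comm, Real.volume_Ioo]
  set m := volume (F ∩ Ioo s t) with hm
  have hM : α * (t - s) < m.toReal := by
    rw [← ENNReal.ofReal_mul hα.le] at h
    exact (ENNReal.ofReal_lt_iff_lt_toReal (by nlinarith) hfin).mp h
  have hM0 : 0 ≤ m.toReal := ENNReal.toReal_nonneg
  calc ENNReal.ofReal (t - s) - m = ENNReal.ofReal (t - s) - ENNReal.ofReal m.toReal := by
        rw [ENNReal.ofReal_toReal hfin]
    _ ≤ ENNReal.ofReal ((t - s) - m.toReal) := le_of_eq (ENNReal.ofReal_sub _ hM0).symm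
    _ ≤ ENNReal.ofReal ((1 - α)/α * m.toReal) := by
        apply ENNReal.ofReal_le_ofReal
        rw [div_mul_eq_mul_div, le_div_iff₀ hα]; nlinarith
    _ = ENNReal.ofReal ((1 - α)/α) * m := by
        rw [ENNReal.ofReal_mul (div_nonneg (by linarith) hα.le), ENNReal.ofReal_toReal hfin]

lemma compact_bound {F : Set ℝ} (hF : MeasurableSet F) {α : ℝ}
    (hα : 0 < α) (hα1 : α < 1) {K : Set ℝ} (hKc : IsCompact K)
    (hKU : ∀ x ∈ K, ∃ s t, s < x ∧ x < t ∧
      ENNReal.ofReal α * ENNReal.ofReal (t - s) < volume (F ∩ Ioo s t))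
    (hKF : Disjoint K F) :
    volume K ≤ ENNReal.ofReal (2*(1 - α)/α) * volume F := by
  set ι := {p : ℝ × ℝ //
    ENNReal.ofReal α * ENNReal.ofReal (p.2 - p.1) < volume (F ∩ Ioo p.1 p.2)} with hι
  have hcov : K ⊆ ⋃ p : ι, Ioo p.1.1 p.1.2 := by
    intro x hx
    obtain ⟨s, t, hs, ht, h⟩ := hKU x hx
    exact mem_iUnion.mpr ⟨⟨(s, t), h⟩, hs, ht⟩
  obtain ⟨ft, hft⟩ := hKc.elim_finite_subcover (fun p : ι => Ioo p.1.1 p.1.2)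
    (fun p => isOpen_Ioo) hcov
  classical
  obtain ⟨u, hu, hucov, humult⟩ := subcover_mult_two (fun p : ι => p.1.1)
    (fun p : ι => p.1.2) ft K hft
  have hlt : ∀ p : ι, p ∈ u → p.1.1 < p.1.2 := by
    intro p _
    by_contra hc
    push_neg at hc
    have : Ioo p.1.1 p.1.2 = ∅ := Ioo_eq_empty (not_lt.mpr hc)
    have h2 := p.2
    rw [this] at h2; simp at h2
  calc volume K ≤ volume (⋃ p ∈ u, Ioo p.1.1 p.1.2 ∩ K) := by
        apply measure_mono
        intro y hy
        obtain ⟨p, hp, hyp⟩ := mem_iUnion₂.mp (hucov hy)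
        exact mem_biUnion hp ⟨hyp, hy⟩
    _ ≤ ∑ p ∈ u, volume (Ioo p.1.1 p.1.2 ∩ K) := measure_biUnion_finset_le u _
    _ ≤ ∑ p ∈ u, volume (Ioo p.1.1 p.1.2 \ F) := by
        apply Finset.sum_le_sum
        intro p _
        exact measure_mono fun y ⟨hy1, hy2⟩ => ⟨hy1, fun hyF => hKF.ne_of_mem hy2 hyF rfl⟩
    _ ≤ ∑ p ∈ u, ENNReal.ofReal ((1 - α)/α) * volume (F ∩ Ioo p.1.1 p.1.2) := by
        apply Finset.sum_le_sum
        intro p hp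
        exact interval_bound hF hα hα1.le (hlt p hp) p.2
    _ = ENNReal.ofReal ((1 - α)/α) * ∑ p ∈ u, volume (F ∩ Ioo p.1.1 p.1.2) := by
        rw [Finset.mul_sum]
    _ ≤ ENNReal.ofReal ((1 - α)/α) * (2 * volume F) := by
        gcongr
        -- multiplicity bound
        calc ∑ p ∈ u, volume (F ∩ Ioo p.1.1 p.1.2)
            = ∑ p ∈ u, ∫⁻ y, (F ∩ Ioo p.1.1 p.1.2).indicator 1 y := by
              refine Finset.sum_congr rfl fun p _ => ?_
              rw [lintegral_indicator_one (hF.inter measurableSet_Ioo)]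
          _ = ∫⁻ y, ∑ p ∈ u, (F ∩ Ioo p.1.1 p.1.2).indicator 1 y := by
              rw [lintegral_finset_sum]
              intro p _
              exact (measurable_one.indicator (hF.inter measurableSet_Ioo))
          _ ≤ ∫⁻ y, 2 * F.indicator 1 y := by
              apply lintegral_mono
              intro y
              dsimp only
              by_cases hyF : y ∈ F
              · simp only [Set.indicator_of_mem hyF, Pi.one_apply, mul_one]
                have : ∀ p ∈ u, (F ∩ Ioo p.1.1 p.1.2).indicator (1 : ℝ → ℝ≥0∞) y
                    = if y ∈ Ioo p.1.1 p.1.2 then 1 else 0 := by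
                  intro p _
                  by_cases hyp : y ∈ Ioo p.1.1 p.1.2 <;>
                    simp [Set.indicator, hyp, hyF]
                rw [Finset.sum_congr rfl this, Finset.sum_boole]
                have h2 := humult y
                calc ((u.filter (fun p => y ∈ Ioo p.1.1 p.1.2)).card : ℝ≥0∞)
                    ≤ ((2:ℕ) : ℝ≥0∞) := by exact_mod_cast h2
                  _ = 2 := by norm_num
              · have : ∀ p ∈ u, (F ∩ Ioo p.1.1 p.1.2).indicator (1 : ℝ → ℝ≥0∞) y = 0 := by
                  intro p _
                  exact Set.indicator_of_notMem (fun h => hyF h.1) _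
                rw [Finset.sum_eq_zero this]
                simp
          _ = 2 * volume F := by
              rw [lintegral_const_mul _ (measurable_one.indicator hF),
                lintegral_indicator_one hF]
    _ = ENNReal.ofReal (2*(1 - α)/α) * volume F := by
        rw [← mul_assoc]
        congr 1
        rw [show (2:ℝ≥0∞) = ENNReal.ofReal 2 by simp,
          ← ENNReal.ofReal_mul (div_nonneg (by linarith) hα.le)]
        congr 1; ring

lemma m1_witness {F : Set ℝ} {v : ℝ} {c : ℝ≥0∞} (h : c < m1 F v) :
    ∃ s t, s < v ∧ v < t ∧ c < volume (F ∩ Ioo s t) / ENNReal.ofReal (t - s) := by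
  simp only [m1, lt_iSup_iff] at h
  obtain ⟨s, t, hs, ht, h⟩ := h
  exact ⟨s, t, hs, ht, h⟩

lemma le_m1 {F : Set ℝ} {w s t : ℝ} (hs : s < w) (ht : w < t) :
    volume (F ∩ Ioo s t) / ENNReal.ofReal (t - s) ≤ m1 F w :=
  le_iSup_of_le s (le_iSup_of_le t (le_iSup_of_le hs (le_iSup_of_le ht le_rfl)))

lemma isOpen_m1_gt (F : Set ℝ) (c : ℝ≥0∞) : IsOpen {v | c < m1 F v} := by
  rw [isOpen_iff_forall_mem_open]
  intro v hv
  obtain ⟨s, t, hs, ht, h⟩ := m1_witness hv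
  exact ⟨Ioo s t, fun w hw => h.trans_le (le_m1 hw.1 hw.2), isOpen_Ioo, hs, ht⟩

lemma m1_bound {F : Set ℝ} (hF : MeasurableSet F) {α : ℝ} (hα : 0 < α) (hα1 : α < 1) :
    volume {v | ENNReal.ofReal α < m1 F v}
      ≤ ENNReal.ofReal (1 + 2*(1 - α)/α) * volume F := by
  have hc0 : (0:ℝ) ≤ 2*(1 - α)/α := div_nonneg (by linarith) hα.le
  have hc : (0:ℝ) < 1 + 2*(1 - α)/α := by linarith
  by_cases hFfin : volume F = ∞
  · rw [hFfin, ENNReal.mul_top (by simp [hc])]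
    exact le_top
  set U := {v | ENNReal.ofReal α < m1 F v} with hU
  have hUopen : IsOpen U := isOpen_m1_gt F _
  have hUF : volume (U \ F) ≤ ENNReal.ofReal (2*(1 - α)/α) * volume F := by
    have hDm : MeasurableSet (U \ F) := hUopen.measurableSet.diff hF
    have hUnion : U \ F = ⋃ n : ℕ, ((U \ F) ∩ Ioo (-(n:ℝ)) n) := by
      ext y
      simp only [mem_iUnion, mem_inter_iff, mem_Ioo]
      constructor
      · intro hy
        obtain ⟨n, hn⟩ := exists_nat_gt |y|
        exact ⟨n, hy, neg_lt_of_abs_lt hn, lt_of_abs_lt hn⟩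
      · rintro ⟨n, hn, _⟩; exact hn
    rw [hUnion, Directed.measure_iUnion
      (Monotone.directed_le (fun n m hnm => inter_subset_inter_right _
        (Ioo_subset_Ioo (by exact_mod_cast neg_le_neg (Nat.cast_le.mpr hnm))
          (by exact_mod_cast Nat.cast_le.mpr hnm))))]
    apply iSup_le
    intro n
    set D := (U \ F) ∩ Ioo (-(n:ℝ)) n with hD
    have hDmeas : MeasurableSet D := hDm.inter measurableSet_Ioo
    have hDfin : volume D ≠ ∞ :=
      ((measure_mono inter_subset_right).trans_lt (by simp [Real.volume_Ioo])).ne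
    apply ENNReal.le_of_forall_pos_le_add
    intro ε hε _
    obtain ⟨K, hKD, hKc, hKlt⟩ := hDmeas.exists_isCompact_lt_add hDfin
      (ε := ε) (by simpa using hε.ne')
    have hKbound : volume K ≤ ENNReal.ofReal (2*(1 - α)/α) * volume F := by
      apply compact_bound hF hα hα1 hKc
      · intro x hx
        have hxU : x ∈ U := ((hKD hx).1).1
        obtain ⟨s, t, hs, ht, h⟩ := m1_witness hxU
        exact ⟨s, t, hs, ht, by
          exact ENNReal.mul_lt_of_lt_div h⟩
      · exact disjoint_sdiff_left.mono_left (hKD.trans inter_subset_left)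
    calc volume D ≤ volume K + ε := hKlt.le
      _ ≤ ENNReal.ofReal (2*(1 - α)/α) * volume F + ε := by gcongr
  calc volume U ≤ volume (U ∩ F) + volume (U \ F) := measure_le_inter_add_diff _ _ _
    _ ≤ volume F + ENNReal.ofReal (2*(1 - α)/α) * volume F := by
        gcongr; exact inter_subset_right
    _ = ENNReal.ofReal (1 + 2*(1 - α)/α) * volume F := by
        rw [ENNReal.ofReal_add zero_le_one hc0, ENNReal.ofReal_one, add_mul,
          one_mul]

section
variable {n : ℕ}

lemma dirMax_witness {n : ℕ} {j : Fin n} {f : (Fin n → ℝ) → ℝ≥0∞}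
    {x : Fin n → ℝ} {c : ℝ≥0∞} (h : c < dirMax j f x) :
    ∃ s t, s < x j ∧ x j < t ∧
      c < (∫⁻ u in Set.Ioo s t, f (Function.update x j u)) / ENNReal.ofReal (t - s) := by
  simp only [dirMax, lt_iSup_iff] at h
  obtain ⟨s, t, hs, ht, h⟩ := h
  exact ⟨s, t, hs, ht, h⟩

lemma le_dirMax {n : ℕ} {j : Fin n} {f : (Fin n → ℝ) → ℝ≥0∞}
    {x : Fin n → ℝ} {s t : ℝ} (hs : s < x j) (ht : x j < t) :
    (∫⁻ u in Set.Ioo s t, f (Function.update x j u)) / ENNReal.ofReal (t - s)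
      ≤ dirMax j f x :=
  le_iSup_of_le s (le_iSup_of_le t (le_iSup_of_le hs (le_iSup_of_le ht le_rfl)))

lemma dirMax_le_one {n : ℕ} (j : Fin n) {f : (Fin n → ℝ) → ℝ≥0∞}
    (hf : ∀ y, f y ≤ 1) (x : Fin n → ℝ) : dirMax j f x ≤ 1 := by
  apply iSup_le; intro s; apply iSup_le; intro t
  apply iSup_le; intro hs; apply iSup_le; intro ht
  apply ENNReal.div_le_of_le_mul
  rw [one_mul]
  calc (∫⁻ u in Set.Ioo s t, f (Function.update x j u))
      ≤ ∫⁻ _ in Set.Ioo s t, 1 := lintegral_mono fun u => hf _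
    _ = ENNReal.ofReal (t - s) := by simp [Real.volume_Ioo]

lemma dirMax_indicator_eq {n : ℕ} (j : Fin n) {A : Set (Fin n → ℝ)}
    (hA : MeasurableSet A) (x : Fin n → ℝ) :
    dirMax j (A.indicator 1) x = m1 {u : ℝ | Function.update x j u ∈ A} (x j) := by
  have hB : MeasurableSet {u : ℝ | Function.update x j u ∈ A} :=
    (measurable_update x).comp measurable_id hA
  unfold dirMax m1
  congr 1; ext s; congr 1; ext t; congr 1; ext hs; congr 1; ext ht
  congr 1
  have : ∀ u : ℝ, A.indicator (1 : (Fin n → ℝ) → ℝ≥0∞) (Function.update x j u)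
      = ({u : ℝ | Function.update x j u ∈ A}).indicator 1 u := by
    intro u
    by_cases hu : Function.update x j u ∈ A <;> simp [Set.indicator, hu]
  rw [lintegral_congr this, lintegral_indicator_one hB, Measure.restrict_apply hB]

lemma step_subset (j : Fin n) {f : (Fin n → ℝ) → ℝ≥0∞} (hf1 : ∀ y, f y ≤ 1)
    {α lam : ℝ} (hα : 0 < α) (hα1 : α < 1) (hlam : 0 < lam) (hlam1 : lam ≤ 1)
    (hA : MeasurableSet {y | ENNReal.ofReal (1 - lam) < f y}) {x : Fin n → ℝ}
    (hx : ENNReal.ofReal (1 - (1 - α) * lam) < dirMax j f x) :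
    ENNReal.ofReal α < dirMax j ({y | ENNReal.ofReal (1 - lam) < f y}.indicator 1) x := by
  set A := {y | ENNReal.ofReal (1 - lam) < f y} with hAdef
  obtain ⟨s, t, hs, ht, h⟩ := dirMax_witness hx
  have hst : s < t := hs.trans ht
  have hL : (0:ℝ) < t - s := by linarith
  set B := {u : ℝ | Function.update x j u ∈ A} with hBdef
  have hB : MeasurableSet B := (measurable_update x).comp measurable_id hA
  set m := volume (B ∩ Ioo s t) with hm
  set m' := volume (Bᶜ ∩ Ioo s t) with hm'
  have hIoofin : volume (Ioo s t) ≠ ∞ := by simp [Real.volume_Ioo]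
  have hmfin : m ≠ ∞ := ((measure_mono inter_subset_right).trans_lt hIoofin.lt_top).ne
  have hm'fin : m' ≠ ∞ := ((measure_mono inter_subset_right).trans_lt hIoofin.lt_top).ne
  have hsum : m + m' = ENNReal.ofReal (t - s) := by
    rw [hm, hm', Set.inter_comm B, Set.inter_comm Bᶜ, ← Set.diff_eq,
      measure_inter_add_diff _ hB, Real.volume_Ioo]
  -- bound the integral
  have hI : (∫⁻ u in Set.Ioo s t, f (Function.update x j u))
      ≤ m + ENNReal.ofReal (1 - lam) * m' := by
    calc (∫⁻ u in Set.Ioo s t, f (Function.update x j u))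
        ≤ ∫⁻ u in Set.Ioo s t,
            (B.indicator 1 u + ENNReal.ofReal (1 - lam) * Bᶜ.indicator 1 u) := by
          apply lintegral_mono
          intro u
          by_cases hu : u ∈ B
          · have h1 : u ∉ Bᶜ := by simp [hu]
            simp only [Set.indicator_of_mem hu, Set.indicator_of_notMem h1,
              Pi.one_apply, mul_zero, add_zero]
            exact hf1 _
          · simp only [Set.indicator_of_notMem hu,
              Set.indicator_of_mem (Set.mem_compl hu), Pi.one_apply, mul_one, zero_add]
            exact le_of_not_gt hu
      _ = m + ENNReal.ofReal (1 - lam) * m' := by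
          rw [lintegral_add_left (measurable_one.indicator hB)]
          rw [lintegral_const_mul _ (measurable_one.indicator hB.compl)]
          rw [lintegral_indicator_one hB, lintegral_indicator_one hB.compl,
            Measure.restrict_apply hB, Measure.restrict_apply hB.compl]
  -- get the real inequality
  have hgt : ENNReal.ofReal (1 - (1 - α) * lam) * ENNReal.ofReal (t - s)
      < m + ENNReal.ofReal (1 - lam) * m' := 
    lt_of_lt_of_le (ENNReal.mul_lt_of_lt_div h) hI
  have hM := ENNReal.toReal_nonneg (a := m)
  have hM' := ENNReal.toReal_nonneg (a := m')
  have hsumR : m.toReal + m'.toReal = t - s := by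
    rw [← ENNReal.toReal_add hmfin hm'fin, hsum, ENNReal.toReal_ofReal hL.le]
  have hgtR : (1 - (1 - α) * lam) * (t - s) < m.toReal + (1 - lam) * m'.toReal := by
    have h1 : ENNReal.ofReal ((1 - (1 - α) * lam) * (t - s))
        < ENNReal.ofReal (m.toReal + (1 - lam) * m'.toReal) := by
      rw [ENNReal.ofReal_mul (by nlinarith), ENNReal.ofReal_add hM (by nlinarith),
        ENNReal.ofReal_mul (by nlinarith)]
      simpa [ENNReal.ofReal_toReal hmfin, ENNReal.ofReal_toReal hm'fin] using hgt
    exact lt_of_not_ge fun hc => absurd (ENNReal.ofReal_le_ofReal hc) (not_le.mpr h1)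
  have hMα : α * (t - s) < m.toReal := by nlinarith
  -- conclude
  rw [dirMax_indicator_eq j hA x]
  refine lt_of_lt_of_le ?_ (le_m1 hs ht)
  rw [ENNReal.lt_div_iff_mul_lt (Or.inl (ENNReal.ofReal_pos.mpr hL).ne') (Or.inl (by simp))]
  calc ENNReal.ofReal α * ENNReal.ofReal (t - s) = ENNReal.ofReal (α * (t - s)) :=
        (ENNReal.ofReal_mul hα.le).symm
    _ < m := by
        rw [← ENNReal.ofReal_toReal hmfin]
        exact ENNReal.ofReal_lt_ofReal_iff_of_nonneg (by nlinarith) |>.mpr hMα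

noncomputable def avgQ (j : Fin n) (f : (Fin n → ℝ) → ℝ≥0∞) (q r : ℚ)
    (x : Fin n → ℝ) : ℝ≥0∞ :=
  (∫⁻ u in Set.Ioo (q:ℝ) (r:ℝ), f (Function.update x j u))
    / ENNReal.ofReal ((r:ℝ) - (q:ℝ))

lemma dirMax_eq_ratSup (j : Fin n) {f : (Fin n → ℝ) → ℝ≥0∞} (hf1 : ∀ y, f y ≤ 1)
    (x : Fin n → ℝ) :
    dirMax j f x = ⨆ (q : ℚ) (r : ℚ) (_ : (q:ℝ) < x j) (_ : x j < (r:ℝ)),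
      avgQ j f q r x := by
  apply le_antisymm
  · apply iSup_le; intro s; apply iSup_le; intro t
    apply iSup_le; intro hs; apply iSup_le; intro ht
    have hL : (0:ℝ) < t - s := by linarith
    apply ENNReal.le_of_forall_pos_le_add
    intro ε hε _
    have hδ : (0:ℝ) < (ε:ℝ) * (t - s) / 2 := by positivity
    set δ := (ε:ℝ) * (t - s) / 2 with hδdef
    obtain ⟨q, hq1, hq2⟩ := exists_rat_btwn (lt_min (by linarith : s < s + δ) hs)
    obtain ⟨r, hr1, hr2⟩ := exists_rat_btwn (max_lt (by linarith : t - δ < t) ht)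
    have hqx : (q:ℝ) < x j := lt_of_lt_of_le hq2 (min_le_right _ _)
    have hxr : x j < (r:ℝ) := lt_of_le_of_lt (le_max_right _ _) hr1
    have hqs : (q:ℝ) - s < δ := by
      have := lt_of_lt_of_le hq2 (min_le_left _ _); linarith
    have htr : t - (r:ℝ) < δ := by
      have := lt_of_le_of_lt (le_max_left _ _) hr1; linarith
    have hsq : s < (q:ℝ) := hq1
    have hrt : (r:ℝ) < t := hr2
    have hqr : (q:ℝ) < (r:ℝ) := hqx.trans hxr
    -- split the integral
    have hsplit : Ioo s t ⊆ (Ioc s (q:ℝ) ∪ Ico (r:ℝ) t) ∪ Ioo (q:ℝ) (r:ℝ) := by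
      intro u hu
      rcases le_or_gt u (q:ℝ) with h | h
      · exact Or.inl (Or.inl ⟨hu.1, h⟩)
      rcases lt_or_ge u (r:ℝ) with h' | h'
      · exact Or.inr ⟨h, h'⟩
      · exact Or.inl (Or.inr ⟨h', hu.2⟩)
    have hIineq : (∫⁻ u in Set.Ioo s t, f (Function.update x j u))
        ≤ ENNReal.ofReal ((ε:ℝ) * (t - s))
          + ∫⁻ u in Set.Ioo (q:ℝ) (r:ℝ), f (Function.update x j u) := by
      calc (∫⁻ u in Set.Ioo s t, f (Function.update x j u))
          ≤ ∫⁻ u in (Ioc s (q:ℝ) ∪ Ico (r:ℝ) t) ∪ Ioo (q:ℝ) (r:ℝ),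
              f (Function.update x j u) := lintegral_mono_set hsplit
        _ ≤ (∫⁻ u in Ioc s (q:ℝ) ∪ Ico (r:ℝ) t, f (Function.update x j u))
              + ∫⁻ u in Ioo (q:ℝ) (r:ℝ), f (Function.update x j u) :=
            lintegral_union_le _ _ _
        _ ≤ ((∫⁻ u in Ioc s (q:ℝ), f (Function.update x j u))
              + ∫⁻ u in Ico (r:ℝ) t, f (Function.update x j u))
              + ∫⁻ u in Ioo (q:ℝ) (r:ℝ), f (Function.update x j u) := by
            gcongr
            exact lintegral_union_le _ _ _
        _ ≤ (ENNReal.ofReal ((q:ℝ) - s) + ENNReal.ofReal (t - (r:ℝ)))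
              + ∫⁻ u in Ioo (q:ℝ) (r:ℝ), f (Function.update x j u) := by
            gcongr
            · calc (∫⁻ u in Ioc s (q:ℝ), f (Function.update x j u))
                  ≤ ∫⁻ _ in Ioc s (q:ℝ), 1 := lintegral_mono fun u => hf1 _
                _ = ENNReal.ofReal ((q:ℝ) - s) := by simp [Real.volume_Ioc]
            · calc (∫⁻ u in Ico (r:ℝ) t, f (Function.update x j u))
                  ≤ ∫⁻ _ in Ico (r:ℝ) t, 1 := lintegral_mono fun u => hf1 _
                _ = ENNReal.ofReal (t - (r:ℝ)) := by simp [Real.volume_Ico]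
        _ ≤ ENNReal.ofReal ((ε:ℝ) * (t - s))
              + ∫⁻ u in Set.Ioo (q:ℝ) (r:ℝ), f (Function.update x j u) := by
            gcongr
            rw [← ENNReal.ofReal_add (by linarith) (by linarith)]
            apply ENNReal.ofReal_le_ofReal
            linarith
    calc (∫⁻ u in Set.Ioo s t, f (Function.update x j u)) / ENNReal.ofReal (t - s)
        ≤ (ENNReal.ofReal ((ε:ℝ) * (t - s))
            + ∫⁻ u in Set.Ioo (q:ℝ) (r:ℝ), f (Function.update x j u))
            / ENNReal.ofReal (t - s) := by gcongr
      _ = ENNReal.ofReal ((ε:ℝ) * (t - s)) / ENNReal.ofReal (t - s)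
            + (∫⁻ u in Set.Ioo (q:ℝ) (r:ℝ), f (Function.update x j u))
            / ENNReal.ofReal (t - s) := ENNReal.add_div
      _ ≤ (ε : ℝ≥0∞) + avgQ j f q r x := by
          gcongr
          · apply ENNReal.div_le_of_le_mul
            rw [ENNReal.ofReal_mul (by positivity)]
            gcongr
            simp [ENNReal.ofReal_coe_nnreal]
          · exact ENNReal.div_le_div le_rfl
              (ENNReal.ofReal_le_ofReal (by linarith))
      _ ≤ (⨆ (q : ℚ) (r : ℚ) (_ : (q:ℝ) < x j) (_ : x j < (r:ℝ)), avgQ j f q r x)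
            + ε := by
          rw [add_comm]
          gcongr
          exact le_iSup_of_le q (le_iSup_of_le r
            (le_iSup_of_le hqx (le_iSup_of_le hxr le_rfl)))
  · apply iSup_le; intro q; apply iSup_le; intro r
    apply iSup_le; intro hq; apply iSup_le; intro hr
    exact le_dirMax hq hr

lemma measurable_update_pair (j : Fin n) :
    Measurable (fun p : (Fin n → ℝ) × ℝ => Function.update p.1 j p.2) := by
  apply measurable_pi_lambda
  intro i
  by_cases hij : i = j
  · subst hij; simpa using measurable_snd
  · have : (fun p : (Fin n → ℝ) × ℝ => Function.update p.1 j p.2 i)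
        = fun p => p.1 i := by
      funext p; rw [Function.update_apply]; simp [hij]
    rw [this]
    exact (measurable_pi_apply i).comp measurable_fst

lemma measurable_avgQ (j : Fin n) {f : (Fin n → ℝ) → ℝ≥0∞} (hf : Measurable f)
    (q r : ℚ) : Measurable (avgQ j f q r) := by
  apply Measurable.div _ measurable_const
  exact (hf.comp (measurable_update_pair j)).lintegral_prod_right'

lemma measurable_dirMax (j : Fin n) {f : (Fin n → ℝ) → ℝ≥0∞} (hf : Measurable f)
    (hf1 : ∀ y, f y ≤ 1) : Measurable (dirMax j f) := by
  have heq : dirMax j f = fun x => ⨆ (q : ℚ) (r : ℚ) (_ : (q:ℝ) < x j)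
      (_ : x j < (r:ℝ)), avgQ j f q r x := funext (dirMax_eq_ratSup j hf1)
  rw [heq]
  apply Measurable.iSup; intro q
  apply Measurable.iSup; intro r
  have heq2 : (fun x : Fin n → ℝ => ⨆ (_ : (q:ℝ) < x j) (_ : x j < (r:ℝ)),
      avgQ j f q r x)
      = Set.indicator {x : Fin n → ℝ | (q:ℝ) < x j ∧ x j < (r:ℝ)} (avgQ j f q r) := by
    funext x
    by_cases h1 : (q:ℝ) < x j <;> by_cases h2 : x j < (r:ℝ) <;>
      simp [Set.indicator, h1, h2]
  rw [heq2]
  exact (measurable_avgQ j hf q r).indicator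
    ((measurableSet_lt measurable_const (measurable_pi_apply j)).inter
      (measurableSet_lt (measurable_pi_apply j) measurable_const))

lemma indicator_le_one (A : Set (Fin n → ℝ)) (y : Fin n → ℝ) :
    A.indicator (1 : (Fin n → ℝ) → ℝ≥0∞) y ≤ 1 := by
  by_cases hy : y ∈ A <;> simp [Set.indicator, hy]

lemma fubini_step {m : ℕ} (j : Fin (m+1)) {A : Set (Fin (m+1) → ℝ)}
    (hA : MeasurableSet A) {α : ℝ} (hα : 0 < α) (hα1 : α < 1) :
    volume {x | ENNReal.ofReal α < dirMax j (A.indicator 1) x}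
      ≤ ENNReal.ofReal (1 + 2*(1 - α)/α) * volume A := by
  set e := MeasurableEquiv.piFinSuccAbove (fun _ : Fin (m+1) => ℝ) j with he
  have hep := volume_preserving_piFinSuccAbove (fun _ : Fin (m+1) => ℝ) j
  have hfwd : ∀ x : Fin (m+1) → ℝ, e x = (x j, fun k => x (j.succAbove k)) :=
    fun x => rfl
  have f1 : ∀ (v : ℝ) (y : Fin m → ℝ), (e.symm (v, y)) j = v := by
    intro v y
    have h := e.apply_symm_apply (v, y)
    rw [hfwd] at h
    exact congrArg Prod.fst h
  have f2 : ∀ (v : ℝ) (y : Fin m → ℝ) (u : ℝ),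
      Function.update (e.symm (v, y)) j u = e.symm (u, y) := by
    intro v y u
    apply e.injective
    rw [hfwd, e.apply_symm_apply]
    have h := e.apply_symm_apply (v, y)
    rw [hfwd] at h
    refine Prod.ext ?_ ?_
    · exact Function.update_self _ _ _
    · have h2 := congrArg Prod.snd h
      simp only at h2 ⊢
      funext k
      rw [Function.update_of_ne (Fin.succAbove_ne j k)]
      exact congrFun h2 k
  have hind : Measurable (A.indicator (1 : (Fin (m+1) → ℝ) → ℝ≥0∞)) := measurable_const.indicator hA
  have hdm := measurable_dirMax j hind (indicator_le_one A)
  have hS : MeasurableSet {x | ENNReal.ofReal α < dirMax j (A.indicator 1) x} :=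
    measurableSet_lt measurable_const hdm
  set S := {x | ENNReal.ofReal α < dirMax j (A.indicator 1) x} with hSdef
  have htrans : ∀ (T : Set (Fin (m+1) → ℝ)),
      volume T = (volume : Measure (ℝ × (Fin m → ℝ))) (e.symm ⁻¹' T) := by
    intro T
    rw [← hep.map_eq, MeasurableEquiv.map_apply, ← Set.preimage_comp,
      MeasurableEquiv.symm_comp_self, Set.preimage_id]
  rw [htrans S, htrans A, Measure.volume_eq_prod,
    Measure.prod_apply_symm (e.symm.measurable hS),
    Measure.prod_apply_symm (e.symm.measurable hA),
    ← lintegral_const_mul' _ _ ENNReal.ofReal_ne_top]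
  apply lintegral_mono
  intro y
  dsimp only
  have hslice : ((fun v => (v, y)) ⁻¹' (e.symm ⁻¹' S))
      = {v | ENNReal.ofReal α < m1 {u : ℝ | e.symm (u, y) ∈ A} v} := by
    ext v
    simp only [mem_preimage, hSdef, mem_setOf_eq]
    rw [dirMax_indicator_eq j hA (e.symm (v, y)), f1]
    constructor
    · intro h; convert h using 3; ext u; rw [f2]
    · intro h; convert h using 3; ext u; rw [f2]
  rw [hslice]
  have hFy : MeasurableSet {u : ℝ | e.symm (u, y) ∈ A} :=
    (e.symm.measurable.comp (measurable_id.prodMk measurable_const)) hA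
  refine (m1_bound hFy hα hα1).trans (le_of_eq ?_)
  rfl

end

lemma foldr_bound {m : ℕ} {α : ℝ} (hα : 0 < α) (hα1 : α < 1)
    {E : Set (Fin (m+1) → ℝ)} (hE : MeasurableSet E) (l : List (Fin (m+1))) :
    Measurable (l.foldr (fun j g => dirMax j g) (E.indicator 1)) ∧
    (∀ y, l.foldr (fun j g => dirMax j g) (E.indicator 1) y ≤ 1) ∧
    volume {x | ENNReal.ofReal (1 - (1 - α)^l.length)
        < l.foldr (fun j g => dirMax j g) (E.indicator 1) x}
      ≤ ENNReal.ofReal (1 + 2*(1 - α)/α) ^ l.length * volume E := by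
  induction l with
  | nil =>
    refine ⟨measurable_const.indicator hE, indicator_le_one E, ?_⟩
    simp only [List.foldr_nil, List.length_nil, pow_zero, one_mul]
    rw [show (1:ℝ) - 1 = 0 by ring, ENNReal.ofReal_zero]
    have : {x | (0:ℝ≥0∞) < E.indicator 1 x} = E := by
      ext x; by_cases hx : x ∈ E <;> simp [Set.indicator, hx]
    rw [this]
  | cons j l ih =>
    obtain ⟨hmeas, hle, hvol⟩ := ih
    have h1α : (0:ℝ) < 1 - α := by linarith
    have hlam : (0:ℝ) < (1 - α)^l.length := by positivity
    have hlam1 : (1 - α)^l.length ≤ 1 := pow_le_one₀ (by linarith) (by linarith)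
    set lam := (1 - α)^l.length with hlamdef
    set g := l.foldr (fun j g => dirMax j g) (E.indicator 1) with hg
    have hA : MeasurableSet {y | ENNReal.ofReal (1 - lam) < g y} :=
      measurableSet_lt measurable_const hmeas
    refine ⟨measurable_dirMax j hmeas hle, dirMax_le_one j hle, ?_⟩
    simp only [List.foldr_cons, List.length_cons]
    have hthresh : (1:ℝ) - (1 - α)^(l.length+1) = 1 - (1 - α)*lam := by
      rw [hlamdef, pow_succ]; ring
    rw [hthresh]
    calc volume {x | ENNReal.ofReal (1 - (1 - α)*lam) < dirMax j g x}
        ≤ volume {x | ENNReal.ofReal α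
            < dirMax j ({y | ENNReal.ofReal (1 - lam) < g y}.indicator 1) x} :=
          measure_mono (fun x hx => step_subset j hle hα hα1 hlam hlam1 hA hx)
      _ ≤ ENNReal.ofReal (1 + 2*(1 - α)/α)
            * volume {y | ENNReal.ofReal (1 - lam) < g y} := fubini_step j hA hα hα1
      _ ≤ ENNReal.ofReal (1 + 2*(1 - α)/α)
            * (ENNReal.ofReal (1 + 2*(1 - α)/α) ^ l.length * volume E) := by
          gcongr
      _ = ENNReal.ofReal (1 + 2*(1 - α)/α) ^ (l.length+1) * volume E := by
          rw [pow_succ]; ring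

theorem iterated_solyanik_geometric (n : ℕ) (hn : 1 ≤ n)
    (α₁ : ℝ) (hα₁ : 0 < α₁) (hα₁' : α₁ < 1)
    (E : Set (Fin n → ℝ)) (hE : MeasurableSet E) :
    volume {x : Fin n → ℝ |
        iterMax n (E.indicator 1) x > ENNReal.ofReal (1 - (1 - α₁) ^ n)}
      ≤ ENNReal.ofReal ((1 + 4 * (1 - α₁) / α₁) ^ n) * volume E := by
  obtain ⟨m, rfl⟩ : ∃ m, n = m + 1 := ⟨n - 1, by omega⟩
  have h := (foldr_bound hα₁ hα₁' hE (List.finRange (m+1))).2.2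
  rw [List.length_finRange] at h
  refine h.trans ?_
  gcongr ?_ * _
  have hy : (0:ℝ) ≤ (1 - α₁)/α₁ := div_nonneg (by linarith) hα₁.le
  have h2 : (0:ℝ) ≤ 1 + 2*(1 - α₁)/α₁ := by
    have : (0:ℝ) ≤ 2*(1 - α₁)/α₁ := by rw [mul_div_assoc]; linarith
    linarith
  rw [← ENNReal.ofReal_pow h2]
  apply ENNReal.ofReal_le_ofReal
  apply pow_le_pow_left₀ h2
  have h24 : 2*(1 - α₁)/α₁ ≤ 4*(1 - α₁)/α₁ := by
    gcongr
    · linarith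
  linarith [h24]
end

section
/- Let n ≥ 1, let 0 < α < 1, and let δ satisfy 1 − α < δ < 1. Then for every measurable set E ⊆ ℝⁿ with |E| < ∞, |{x ∈ ℝⁿ : M_{HL,b} χ_E(x) > α}| ≤ (1 + 2δ^{1/n})^n · (δ/(δ − (1−α))) · |E|. -/
open MeasureTheory Set Filter
open scoped ENNReal

/-- The uncentered Hardy–Littlewood maximal operator with respect to
Euclidean balls on `ℝⁿ`. -/
noncomputable def MHLb (n : ℕ) (f : EuclideanSpace ℝ (Fin n) → ℝ≥0∞)
    (x : EuclideanSpace ℝ (Fin n)) : ℝ≥0∞ :=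
  ⨆ (z : EuclideanSpace ℝ (Fin n)) (r : ℝ) (_ : 0 < r) (_ : x ∈ Metric.ball z r),
    (∫⁻ y in Metric.ball z r, f y) / volume (Metric.ball z r)

section helpers
open Metric

variable {n : ℕ}

local notation "Xn" => EuclideanSpace ℝ (Fin n)

lemma ball_subset_dilate_of_core_inter {z₁ z₂ : Xn} {r₁ r₂ c : ℝ} (hc : 0 < c)
    (h : ¬ Disjoint (Metric.ball z₁ (c * r₁)) (Metric.ball z₂ (c * r₂))) (hr : r₁ ≤ r₂) :
    Metric.ball z₁ r₁ ⊆ Metric.ball z₂ ((1 + 2 * c) * r₂) := by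
  obtain ⟨w, hw1, hw2⟩ := Set.not_disjoint_iff.mp h
  rw [Metric.mem_ball] at hw1 hw2
  intro y hy
  rw [Metric.mem_ball] at hy ⊢
  have h12 : dist z₁ z₂ < c * r₁ + c * r₂ :=
    calc dist z₁ z₂ ≤ dist w z₁ + dist w z₂ := dist_triangle_left _ _ _
    _ < c * r₁ + c * r₂ := by gcongr
  calc dist y z₂ ≤ dist y z₁ + dist z₁ z₂ := dist_triangle _ _ _
    _ < r₁ + (c * r₁ + c * r₂) := by gcongr
    _ ≤ (1 + 2 * c) * r₂ := by nlinarith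

lemma exists_selection {c : ℝ} (hc : 0 < c) :
    ∀ (m : ℕ) (F : Finset (Xn × ℝ)), F.card ≤ m →
    ∃ G ⊆ F,
      ((G : Set (Xn × ℝ)).PairwiseDisjoint fun p => Metric.ball p.1 (c * p.2)) ∧
      (⋃ p ∈ F, Metric.ball p.1 p.2) ⊆ ⋃ p ∈ G, Metric.ball p.1 ((1 + 2 * c) * p.2) := by
  intro m
  induction m with
  | zero =>
    intro F hF
    have : F = ∅ := Finset.card_eq_zero.mp (Nat.le_zero.mp hF)
    subst this
    exact ⟨∅, le_rfl, by simp [Set.PairwiseDisjoint, Set.Pairwise], by simp⟩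
  | succ m ih =>
    intro F hF
    classical
    rcases F.eq_empty_or_nonempty with rfl | hne
    · exact ⟨∅, le_rfl, by simp [Set.PairwiseDisjoint, Set.Pairwise], by simp⟩
    obtain ⟨p₀, hp₀F, hp₀max⟩ := F.exists_max_image (fun p => p.2) hne
    set F' := (F.erase p₀).filter
      (fun p => Disjoint (Metric.ball p.1 (c * p.2)) (Metric.ball p₀.1 (c * p₀.2))) with hF'def
    have hF'card : F'.card ≤ m := by
      have h1 : F'.card ≤ (F.erase p₀).card := Finset.card_filter_le _ _
      have h2 : (F.erase p₀).card = F.card - 1 := Finset.card_erase_of_mem hp₀F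
      have h3 : 1 ≤ F.card := Finset.card_pos.mpr hne
      omega
    obtain ⟨G', hG'sub, hG'dis, hG'cov⟩ := ih F' hF'card
    have hG'F : ∀ p ∈ G', p ∈ F' := fun p hp => hG'sub hp
    have hG'core : ∀ p ∈ G',
        Disjoint (Metric.ball p.1 (c * p.2)) (Metric.ball p₀.1 (c * p₀.2)) := by
      intro p hp
      exact (Finset.mem_filter.mp (hG'F p hp)).2
    refine ⟨insert p₀ G', ?_, ?_, ?_⟩
    · refine Finset.insert_subset hp₀F (hG'sub.trans ?_)
      exact (Finset.filter_subset _ _).trans (F.erase_subset _)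
    · intro p hp q hq hpq
      simp only [Finset.coe_insert, Set.mem_insert_iff] at hp hq
      rcases hp with rfl | hp <;> rcases hq with rfl | hq
      · exact absurd rfl hpq
      · exact (hG'core q hq).symm
      · exact hG'core p hp
      · exact hG'dis hp hq hpq
    · intro x hx
      simp only [Set.mem_iUnion, exists_prop] at hx ⊢
      obtain ⟨p, hpF, hxp⟩ := hx
      by_cases hd : Disjoint (Metric.ball p.1 (c * p.2)) (Metric.ball p₀.1 (c * p₀.2))
      · by_cases hpp : p = p₀
        · subst hpp
          refine ⟨p, Finset.mem_insert_self _ _, ?_⟩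
          have hr : 0 < p.2 := pos_of_mem_ball hxp
          exact Metric.ball_subset_ball (by nlinarith) hxp
        · have hpF' : p ∈ F' := Finset.mem_filter.mpr ⟨Finset.mem_erase.mpr ⟨hpp, hpF⟩, hd⟩
          have := hG'cov (Set.mem_biUnion hpF' hxp)
          simp only [Set.mem_iUnion, exists_prop] at this
          obtain ⟨q, hq, hxq⟩ := this
          exact ⟨q, Finset.mem_insert_of_mem hq, hxq⟩
      · exact ⟨p₀, Finset.mem_insert_self _ _,
          ball_subset_dilate_of_core_inter hc hd (hp₀max p hpF) hxp⟩

/-- Union-dilation estimate: dilating each ball of a finite family by a factor `L ≥ 1`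
increases the measure of the union by at most `L ^ n`. -/
lemma measure_biUnion_dilate {L : ℝ} (hL : 1 ≤ L) :
    ∀ (m : ℕ) (F : Finset (Xn × ℝ)), F.card ≤ m →
    volume (⋃ p ∈ F, Metric.ball p.1 (L * p.2)) ≤
      ENNReal.ofReal (L ^ n) * volume (⋃ p ∈ F, Metric.ball p.1 p.2) := by
  have hL0 : (0:ℝ) < L := lt_of_lt_of_le one_pos hL
  intro m
  induction m with
  | zero =>
    intro F hF
    have : F = ∅ := Finset.card_eq_zero.mp (Nat.le_zero.mp hF)
    subst this
    simp
  | succ m ih =>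
    intro F hF
    classical
    rcases F.eq_empty_or_nonempty with rfl | hne
    · simp
    obtain ⟨p₀, hp₀F, hp₀min⟩ := F.exists_min_image (fun p => p.2) hne
    set F' := F.erase p₀ with hF'def
    have hins : insert p₀ F' = F := Finset.insert_erase hp₀F
    have hF'card : F'.card ≤ m := by
      have h2 : F'.card = F.card - 1 := Finset.card_erase_of_mem hp₀F
      have h3 : 1 ≤ F.card := Finset.card_pos.mpr hne
      omega
    have hmin : ∀ p ∈ F', p₀.2 ≤ p.2 := fun p hp => hp₀min p (F.erase_subset _ hp)
    set U' : Set Xn := ⋃ p ∈ F', Metric.ball p.1 p.2 with hU'def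
    set D' : Set Xn := ⋃ p ∈ F', Metric.ball p.1 (L * p.2) with hD'def
    set B₀ : Set Xn := Metric.ball p₀.1 p₀.2 with hB₀def
    set D₀ : Set Xn := Metric.ball p₀.1 (L * p₀.2) with hD₀def
    have hUmeas : MeasurableSet U' := F'.measurableSet_biUnion (fun p _ => measurableSet_ball)
    -- key pointwise inclusion
    have key : D₀ \ D' ⊆ (AffineMap.homothety p₀.1 L) '' (B₀ \ U') := by
      rintro x ⟨hxD₀, hxD'⟩
      rw [hD₀def, Metric.mem_ball] at hxD₀
      have hr₀ : 0 < dist x p₀.1 ∨ 0 ≤ dist x p₀.1 := Or.inr dist_nonneg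
      refine ⟨AffineMap.homothety p₀.1 L⁻¹ x, ⟨?_, ?_⟩, ?_⟩
      · -- in B₀
        rw [hB₀def, Metric.mem_ball, AffineMap.homothety_apply]
        simp only [vsub_eq_sub, vadd_eq_add]
        rw [dist_eq_norm, add_sub_cancel_right, norm_smul, Real.norm_eq_abs,
          abs_of_pos (inv_pos.mpr hL0)]
        calc L⁻¹ * ‖x - p₀.1‖ < L⁻¹ * (L * p₀.2) := by
              rw [← dist_eq_norm]
              exact mul_lt_mul_of_pos_left hxD₀ (inv_pos.mpr hL0)
          _ = p₀.2 := by field_simp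
      · -- not in U'
        intro hyU'
        rw [hU'def] at hyU'
        simp only [Set.mem_iUnion, exists_prop] at hyU'
        obtain ⟨p, hpF', hyp⟩ := hyU'
        rw [Metric.mem_ball] at hyp
        apply hxD'
        rw [hD'def]
        simp only [Set.mem_iUnion, exists_prop]
        refine ⟨p, hpF', ?_⟩
        rw [Metric.mem_ball]
        have hdxy : dist x (AffineMap.homothety p₀.1 L⁻¹ x) ≤ (L - 1) * p₀.2 := by
          rw [AffineMap.homothety_apply]
          simp only [vsub_eq_sub, vadd_eq_add]
          rw [dist_eq_norm]
          have hx_eq : x - (L⁻¹ • (x - p₀.1) + p₀.1) = (1 - L⁻¹) • (x - p₀.1) := by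
            rw [sub_smul, one_smul]
            abel
          rw [hx_eq, norm_smul, Real.norm_eq_abs,
            abs_of_nonneg (by rw [sub_nonneg]; exact inv_le_one_of_one_le₀ hL)]
          have h1 : ‖x - p₀.1‖ ≤ L * p₀.2 := by rw [← dist_eq_norm]; exact hxD₀.le
          have h2 : 0 ≤ 1 - L⁻¹ := by rw [sub_nonneg]; exact inv_le_one_of_one_le₀ hL
          calc (1 - L⁻¹) * ‖x - p₀.1‖ ≤ (1 - L⁻¹) * (L * p₀.2) := by
                exact mul_le_mul_of_nonneg_left h1 h2
            _ = (L - 1) * p₀.2 := by field_simp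
        have hr0p : p₀.2 ≤ p.2 := hmin p hpF'
        calc dist x p.1 ≤ dist x (AffineMap.homothety p₀.1 L⁻¹ x)
              + dist (AffineMap.homothety p₀.1 L⁻¹ x) p.1 := dist_triangle _ _ _
          _ < (L - 1) * p₀.2 + p.2 := by
              have := add_lt_add_of_le_of_lt hdxy hyp
              exact this
          _ ≤ L * p.2 := by nlinarith
      · -- maps back to x
        rw [AffineMap.homothety_apply, AffineMap.homothety_apply]
        simp only [vsub_eq_sub, vadd_eq_add]
        rw [add_sub_cancel_right, smul_smul, mul_inv_cancel₀ (ne_of_gt hL0), one_smul]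
        abel
    -- measure computation
    have himg : volume ((AffineMap.homothety p₀.1 L) '' (B₀ \ U'))
        = ENNReal.ofReal (L ^ n) * volume (B₀ \ U') := by
      rw [Measure.addHaar_image_homothety]
      congr 2
      rw [finrank_euclideanSpace_fin]
      exact abs_of_nonneg (pow_nonneg (le_of_lt hL0) n)
    calc volume (⋃ p ∈ F, Metric.ball p.1 (L * p.2))
        = volume (D' ∪ D₀) := by
          rw [← hins, Finset.set_biUnion_insert, Set.union_comm]
      _ = volume (D' ∪ (D₀ \ D')) := by rw [Set.union_diff_self]
      _ ≤ volume D' + volume (D₀ \ D') := measure_union_le _ _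
      _ ≤ ENNReal.ofReal (L ^ n) * volume U' + ENNReal.ofReal (L ^ n) * volume (B₀ \ U') := by
          refine add_le_add (ih F' hF'card) ?_
          calc volume (D₀ \ D') ≤ volume ((AffineMap.homothety p₀.1 L) '' (B₀ \ U')) :=
                measure_mono key
            _ = ENNReal.ofReal (L ^ n) * volume (B₀ \ U') := himg
      _ = ENNReal.ofReal (L ^ n) * (volume U' + volume (B₀ \ U')) := (mul_add _ _ _).symm
      _ = ENNReal.ofReal (L ^ n) * volume (U' ∪ B₀) := by
          congr 1
          rw [← Set.union_diff_self]
          exact (measure_union disjoint_sdiff_right (measurableSet_ball.diff hUmeas)).symm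
      _ = ENNReal.ofReal (L ^ n) * volume (⋃ p ∈ F, Metric.ball p.1 p.2) := by
          rw [← hins, Finset.set_biUnion_insert, Set.union_comm]

/-- Mass of `E` in the shrunk core of a ball of `E`-density `> α`. -/
lemma core_mass {E : Set Xn} (hE : MeasurableSet E) {z : Xn} {r c α δ : ℝ}
    (hc0 : 0 < c) (hc1 : c ≤ 1) (hr : 0 < r) (hα0 : 0 ≤ α) (hδ0 : 0 ≤ δ)
    (hδu : 0 ≤ δ - (1 - α)) (hcn : c ^ n = δ)
    (hgood : ENNReal.ofReal α * volume (Metric.ball z r) < volume (E ∩ Metric.ball z r)) :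
    ENNReal.ofReal (δ - (1 - α)) * volume (Metric.ball z r)
      ≤ volume (E ∩ Metric.ball z (c * r)) := by
  set B := Metric.ball z r with hBdef
  set Q := Metric.ball z (c * r) with hQdef
  have hQB : Q ⊆ B := Metric.ball_subset_ball (by nlinarith)
  have hvolB_ne : volume B ≠ ⊤ := measure_ball_lt_top.ne
  have hQvol : volume Q = ENNReal.ofReal δ * volume B := by
    rw [hQdef, hBdef, Measure.addHaar_ball_mul_of_pos volume z hc0 r,
      finrank_euclideanSpace_fin, hcn, ← Measure.addHaar_ball_center volume z r]
  have hsub : E ∩ B ⊆ (E ∩ Q) ∪ (B \ Q) := by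
    rintro x ⟨hxE, hxB⟩
    by_cases h : x ∈ Q
    · exact Or.inl ⟨hxE, h⟩
    · exact Or.inr ⟨hxB, h⟩
  have m1 : volume (E ∩ B) ≤ volume (E ∩ Q) + volume (B \ Q) :=
    (measure_mono hsub).trans (measure_union_le _ _)
  have m2 : volume (B \ Q) + volume Q = volume B := by
    have h := measure_inter_add_diff (μ := volume) B (measurableSet_ball : MeasurableSet Q)
    rw [Set.inter_eq_self_of_subset_right hQB] at h
    rw [add_comm]
    exact h
  have step : ENNReal.ofReal (δ - (1 - α)) * volume B + volume B
      ≤ volume (E ∩ Q) + volume B := by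
    calc ENNReal.ofReal (δ - (1 - α)) * volume B + volume B
        = (ENNReal.ofReal (δ - (1 - α)) + 1) * volume B := by rw [add_mul, one_mul]
      _ = (ENNReal.ofReal α + ENNReal.ofReal δ) * volume B := by
          rw [← ENNReal.ofReal_one, ← ENNReal.ofReal_add hδu (by norm_num),
            ← ENNReal.ofReal_add hα0 hδ0]
          congr 2
          ring
      _ = ENNReal.ofReal α * volume B + volume Q := by rw [add_mul, hQvol]
      _ ≤ volume (E ∩ B) + volume Q := add_le_add_left hgood.le _
      _ ≤ (volume (E ∩ Q) + volume (B \ Q)) + volume Q := add_le_add_left m1 _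
      _ = volume (E ∩ Q) + volume B := by rw [add_assoc, m2]
  exact (ENNReal.add_le_add_iff_right hvolB_ne).mp step

/-- The complement of `E` in a ball of `E`-density `> α` has measure at most `(1-α)` times. -/
lemma ball_diff_mass {E : Set Xn} (hE : MeasurableSet E) {z : Xn} {r α : ℝ}
    (hα0 : 0 ≤ α) (hα1 : α ≤ 1)
    (hgood : ENNReal.ofReal α * volume (Metric.ball z r) < volume (E ∩ Metric.ball z r)) :
    volume (Metric.ball z r \ E) ≤ ENNReal.ofReal (1 - α) * volume (Metric.ball z r) := by
  set B := Metric.ball z r with hBdef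
  have hfin : ENNReal.ofReal α * volume B ≠ ⊤ :=
    ENNReal.mul_ne_top ENNReal.ofReal_ne_top measure_ball_lt_top.ne
  have m : volume (B ∩ E) + volume (B \ E) = volume B := measure_inter_add_diff B hE
  have step : ENNReal.ofReal α * volume B + volume (B \ E)
      ≤ ENNReal.ofReal α * volume B + ENNReal.ofReal (1 - α) * volume B := by
    calc ENNReal.ofReal α * volume B + volume (B \ E)
        ≤ volume (E ∩ B) + volume (B \ E) := add_le_add_left hgood.le _
      _ = volume (B ∩ E) + volume (B \ E) := by rw [Set.inter_comm]
      _ = volume B := m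
      _ = (ENNReal.ofReal α + ENNReal.ofReal (1 - α)) * volume B := by
          rw [← ENNReal.ofReal_add hα0 (by linarith)]
          norm_num
      _ = ENNReal.ofReal α * volume B + ENNReal.ofReal (1 - α) * volume B := add_mul _ _ _
  exact (ENNReal.add_le_add_iff_left hfin).mp step
end helpers

theorem uncentered_ball_solyanik_quantitative (n : ℕ) (hn : 1 ≤ n)
    (α δ : ℝ) (hα0 : 0 < α) (hα1 : α < 1) (hδ : 1 - α < δ) (hδ1 : δ < 1)
    (E : Set (EuclideanSpace ℝ (Fin n))) (hE : MeasurableSet E)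
    (hEfin : volume E < ⊤) :
    volume {x : EuclideanSpace ℝ (Fin n) |
        MHLb n (E.indicator 1) x > ENNReal.ofReal α}
      ≤ ENNReal.ofReal
          ((1 + 2 * δ ^ ((n : ℝ)⁻¹)) ^ n * (δ / (δ - (1 - α)))) * volume E := by
  classical
  have hδ0 : (0:ℝ) < δ := lt_trans (by linarith) hδ
  have hδu : (0:ℝ) < δ - (1 - α) := by linarith
  have hn' : (0:ℝ) < (n:ℝ) := by
    have : 0 < n := hn
    exact_mod_cast this
  set c : ℝ := δ ^ ((n : ℝ)⁻¹) with hcdef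
  have hc0 : 0 < c := Real.rpow_pos_of_pos hδ0 _
  have hc1 : c < 1 := Real.rpow_lt_one hδ0.le hδ1 (by positivity)
  have hcn : c ^ n = δ := by
    rw [hcdef, ← Real.rpow_natCast (δ ^ ((n:ℝ)⁻¹)) n, ← Real.rpow_mul hδ0.le,
      inv_mul_cancel₀ (ne_of_gt hn'), Real.rpow_one]
  have hL1 : (1:ℝ) ≤ 1 + 2 * c := by nlinarith
  -- the family of good balls
  set good : (EuclideanSpace ℝ (Fin n)) × ℝ → Prop := fun p => 0 < p.2 ∧
    ENNReal.ofReal α * volume (Metric.ball p.1 p.2) < volume (E ∩ Metric.ball p.1 p.2)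
    with hgdef
  set U : Set (EuclideanSpace ℝ (Fin n)) :=
    ⋃ (p : (EuclideanSpace ℝ (Fin n)) × ℝ) (_ : good p), Metric.ball p.1 p.2 with hUdef
  have hUopen : IsOpen U := isOpen_iUnion fun p => isOpen_iUnion fun _ => Metric.isOpen_ball
  have hint : ∀ (z : EuclideanSpace ℝ (Fin n)) (r : ℝ),
      (∫⁻ y in Metric.ball z r, E.indicator 1 y) = volume (E ∩ Metric.ball z r) := by
    intro z r
    rw [lintegral_indicator_one hE, Measure.restrict_apply hE]
  have hAU : {x : EuclideanSpace ℝ (Fin n) |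
      MHLb n (E.indicator 1) x > ENNReal.ofReal α} ⊆ U := by
    intro x hx
    rw [Set.mem_setOf_eq, gt_iff_lt, MHLb] at hx
    simp only [lt_iSup_iff] at hx
    obtain ⟨z, r, hr, hxball, hlt⟩ := hx
    rw [hint z r] at hlt
    have hmul : ENNReal.ofReal α * volume (Metric.ball z r)
        < volume (E ∩ Metric.ball z r) := by
      refine (ENNReal.lt_div_iff_mul_lt (Or.inl ?_) (Or.inl ?_)).mp hlt
      · exact (Metric.measure_ball_pos volume z hr).ne'
      · exact measure_ball_lt_top.ne
    rw [hUdef]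
    simp only [Set.mem_iUnion]
    exact ⟨(z, r), ⟨hr, hmul⟩, hxball⟩
  -- bound for compact subsets
  have keyK : ∀ K : Set (EuclideanSpace ℝ (Fin n)), K ⊆ U → IsCompact K →
      volume K ≤ ENNReal.ofReal
        ((1 + 2 * δ ^ ((n : ℝ)⁻¹)) ^ n * (δ / (δ - (1 - α)))) * volume E := by
    intro K hKU hK
    have hUeq : U = ⋃ i : {p : (EuclideanSpace ℝ (Fin n)) × ℝ // good p},
        Metric.ball i.1.1 i.1.2 := by
      rw [hUdef, Set.iUnion_subtype]
    obtain ⟨t, ht⟩ := hK.elim_finite_subcover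
      (fun i : {p : (EuclideanSpace ℝ (Fin n)) × ℝ // good p} => Metric.ball i.1.1 i.1.2)
      (fun i => Metric.isOpen_ball) (by rw [← hUeq]; exact hKU)
    set F : Finset ((EuclideanSpace ℝ (Fin n)) × ℝ) := t.image Subtype.val with hFdef
    have hFgood : ∀ p ∈ F, good p := by
      intro p hp
      obtain ⟨i, _, rfl⟩ := Finset.mem_image.mp hp
      exact i.2
    have hKF : K ⊆ ⋃ p ∈ F, Metric.ball p.1 p.2 := by
      intro x hx
      have hx' := ht hx
      simp only [Set.mem_iUnion, exists_prop] at hx' ⊢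
      obtain ⟨i, hi, hxi⟩ := hx'
      exact ⟨i.1, Finset.mem_image_of_mem _ hi, hxi⟩
    obtain ⟨G, hGF, hGdis, hGcov⟩ := exists_selection hc0 F.card F le_rfl
    have hGgood : ∀ p ∈ G, good p := fun p hp => hFgood p (hGF hp)
    set S : ℝ≥0∞ := ∑ p ∈ G, volume (Metric.ball p.1 p.2) with hSdef
    have hS1 : ENNReal.ofReal (δ - (1 - α)) * S ≤ volume E := by
      rw [hSdef, Finset.mul_sum]
      have hle : ∀ p ∈ G,
          ENNReal.ofReal (δ - (1 - α)) * volume (Metric.ball p.1 p.2)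
            ≤ volume (E ∩ Metric.ball p.1 (c * p.2)) := by
        intro p hp
        exact core_mass hE hc0 hc1.le (hGgood p hp).1 hα0.le hδ0.le hδu.le hcn
          (hGgood p hp).2
      calc ∑ p ∈ G, ENNReal.ofReal (δ - (1 - α)) * volume (Metric.ball p.1 p.2)
          ≤ ∑ p ∈ G, volume (E ∩ Metric.ball p.1 (c * p.2)) := Finset.sum_le_sum hle
        _ = volume (⋃ p ∈ G, E ∩ Metric.ball p.1 (c * p.2)) := by
            refine (measure_biUnion_finset ?_ (fun p _ => hE.inter measurableSet_ball)).symm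
            exact hGdis.mono_on fun p _ => Set.inter_subset_right
        _ ≤ volume E := measure_mono (Set.iUnion₂_subset fun p hp => Set.inter_subset_left)
    have hS2 : volume (⋃ p ∈ G, Metric.ball p.1 p.2)
        ≤ volume E + ENNReal.ofReal (1 - α) * S := by
      have hsplit := measure_inter_add_diff (μ := volume)
        (⋃ p ∈ G, Metric.ball p.1 p.2) hE
      calc volume (⋃ p ∈ G, Metric.ball p.1 p.2)
          = volume ((⋃ p ∈ G, Metric.ball p.1 p.2) ∩ E)
            + volume ((⋃ p ∈ G, Metric.ball p.1 p.2) \ E) := hsplit.symm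
        _ ≤ volume E + ENNReal.ofReal (1 - α) * S := by
            refine add_le_add (measure_mono Set.inter_subset_right) ?_
            have hsub : (⋃ p ∈ G, Metric.ball p.1 p.2) \ E
                ⊆ ⋃ p ∈ G, (Metric.ball p.1 p.2 \ E) := by
              rintro x ⟨hx1, hx2⟩
              simp only [Set.mem_iUnion, exists_prop] at hx1 ⊢
              obtain ⟨p, hp, hxp⟩ := hx1
              exact ⟨p, hp, hxp, hx2⟩
            calc volume ((⋃ p ∈ G, Metric.ball p.1 p.2) \ E)
                ≤ volume (⋃ p ∈ G, (Metric.ball p.1 p.2 \ E)) := measure_mono hsub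
              _ ≤ ∑ p ∈ G, volume (Metric.ball p.1 p.2 \ E) :=
                  measure_biUnion_finset_le _ _
              _ ≤ ∑ p ∈ G, ENNReal.ofReal (1 - α) * volume (Metric.ball p.1 p.2) := by
                  refine Finset.sum_le_sum fun p hp => ?_
                  exact ball_diff_mass hE hα0.le hα1.le (hGgood p hp).2
              _ = ENNReal.ofReal (1 - α) * S := by rw [hSdef, Finset.mul_sum]
    have hq : (0:ℝ) ≤ (1 - α) / (δ - (1 - α)) := div_nonneg (by linarith) (by linarith)
    have hS3 : ENNReal.ofReal (1 - α) * S
        ≤ ENNReal.ofReal ((1 - α) / (δ - (1 - α))) * volume E := by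
      have h1 : ENNReal.ofReal (1 - α)
          = ENNReal.ofReal ((1 - α) / (δ - (1 - α))) * ENNReal.ofReal (δ - (1 - α)) := by
        rw [← ENNReal.ofReal_mul hq]
        congr 1
        field_simp
      rw [h1, mul_assoc]
      exact mul_le_mul_right hS1 _
    have hmain : volume (⋃ p ∈ G, Metric.ball p.1 p.2)
        ≤ ENNReal.ofReal (δ / (δ - (1 - α))) * volume E := by
      calc volume (⋃ p ∈ G, Metric.ball p.1 p.2)
          ≤ volume E + ENNReal.ofReal (1 - α) * S := hS2
        _ ≤ volume E + ENNReal.ofReal ((1 - α) / (δ - (1 - α))) * volume E :=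
            add_le_add_right hS3 _
        _ = (1 + ENNReal.ofReal ((1 - α) / (δ - (1 - α)))) * volume E := by
            rw [add_mul, one_mul]
        _ = ENNReal.ofReal (δ / (δ - (1 - α))) * volume E := by
            congr 1
            rw [← ENNReal.ofReal_one, ← ENNReal.ofReal_add (by norm_num) hq]
            congr 1
            field_simp
            ring
    calc volume K
        ≤ volume (⋃ p ∈ G, Metric.ball p.1 ((1 + 2 * c) * p.2)) :=
          measure_mono (hKF.trans hGcov)
      _ ≤ ENNReal.ofReal ((1 + 2 * c) ^ n) * volume (⋃ p ∈ G, Metric.ball p.1 p.2) :=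
          measure_biUnion_dilate hL1 G.card G le_rfl
      _ ≤ ENNReal.ofReal ((1 + 2 * c) ^ n)
            * (ENNReal.ofReal (δ / (δ - (1 - α))) * volume E) := mul_le_mul_right hmain _
      _ = ENNReal.ofReal
            ((1 + 2 * δ ^ ((n : ℝ)⁻¹)) ^ n * (δ / (δ - (1 - α)))) * volume E := by
          rw [← mul_assoc, ← ENNReal.ofReal_mul (by positivity)]
  -- conclude by inner regularity
  calc volume {x : EuclideanSpace ℝ (Fin n) |
        MHLb n (E.indicator 1) x > ENNReal.ofReal α}
      ≤ volume U := measure_mono hAU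
    _ = ⨆ (K : Set (EuclideanSpace ℝ (Fin n))) (_ : K ⊆ U) (_ : IsCompact K), volume K :=
        hUopen.measure_eq_iSup_isCompact volume
    _ ≤ ENNReal.ofReal
          ((1 + 2 * δ ^ ((n : ℝ)⁻¹)) ^ n * (δ / (δ - (1 - α)))) * volume E := by
        refine iSup_le fun K => iSup_le fun hKU => iSup_le fun hK => keyK K hKU hK
end

section
/- Let C_{HL,b}(α) = sup over measurable sets E ⊆ ℝⁿ with 0 < |E| < ∞ of (1/|E|)·|{x ∈ ℝⁿ : M_{HL,b} χ_E(x) > α}|. Then lim_{α→1⁻} C_{HL,b}(α) = 1. -/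
open MeasureTheory Set Filter
open scoped ENNReal

/-- The sharp Tauberian constant `C_{HL,b}(α)` of the uncentered
Hardy–Littlewood maximal operator with respect to balls. -/
noncomputable def CHLb (n : ℕ) (α : ℝ) : ℝ≥0∞ :=
  ⨆ (E : Set (EuclideanSpace ℝ (Fin n))) (_ : MeasurableSet E)
    (_ : 0 < volume E) (_ : volume E < ⊤),
    volume {x : EuclideanSpace ℝ (Fin n) |
      MHLb n (E.indicator 1) x > ENNReal.ofReal α} / volume E

section SolyanikAux

open Metric

/-- Abbreviation for the ambient Euclidean space. -/
abbrev Pt (n : ℕ) := EuclideanSpace ℝ (Fin n)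

lemma lintegral_ind_ball {n : ℕ} {E : Set (Pt n)} (hE : MeasurableSet E)
    (z : Pt n) (r : ℝ) :
    (∫⁻ y in Metric.ball z r, E.indicator 1 y) = volume (E ∩ Metric.ball z r) := by
  rw [lintegral_indicator hE, Measure.restrict_restrict hE]
  simp

lemma mem_A_iff {n : ℕ} {E : Set (Pt n)} (hE : MeasurableSet E) {α : ℝ} (x : Pt n) :
    MHLb n (E.indicator 1) x > ENNReal.ofReal α ↔
      ∃ z : Pt n, ∃ r : ℝ, 0 < r ∧ x ∈ ball z r ∧
        ENNReal.ofReal α * volume (ball z r) < volume (E ∩ ball z r) := by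
  unfold MHLb
  rw [gt_iff_lt, lt_iSup_iff]
  refine exists_congr fun z => ?_
  rw [lt_iSup_iff]
  refine exists_congr fun r => ?_
  rw [lt_iSup_iff]
  constructor
  · rintro ⟨hr, h⟩
    rw [lt_iSup_iff] at h
    obtain ⟨hx, h⟩ := h
    refine ⟨hr, hx, ?_⟩
    rwa [lintegral_ind_ball hE, ENNReal.lt_div_iff_mul_lt
      (Or.inl (measure_ball_pos volume z hr).ne') (Or.inl measure_ball_lt_top.ne)] at h
  · rintro ⟨hr, hx, h⟩
    refine ⟨hr, ?_⟩
    rw [lt_iSup_iff]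
    refine ⟨hx, ?_⟩
    rwa [lintegral_ind_ball hE, ENNReal.lt_div_iff_mul_lt
      (Or.inl (measure_ball_pos volume z hr).ne') (Or.inl measure_ball_lt_top.ne)]

lemma contract_notin {V : Type*} [NormedAddCommGroup V] [NormedSpace ℝ V]
    {z₀ x z : V} {r₀ rr t : ℝ} (ht : 0 ≤ t) (hr : r₀ ≤ rr)
    (hx : x ∈ ball z₀ r₀) (hout : x ∉ ball z rr) :
    AffineMap.homothety z₀ (1 - t) x ∉ ball z ((1 - t) * rr) := by
  rw [mem_ball, dist_eq_norm] at hx ⊢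
  rw [mem_ball, dist_eq_norm] at hout
  push_neg at hout ⊢
  have key : AffineMap.homothety z₀ (1 - t) x - z = (x - z) - t • (x - z₀) := by
    simp only [AffineMap.homothety_apply, vsub_eq_sub, vadd_eq_add]
    rw [sub_smul, one_smul]
    abel
  rw [key]
  have h1 : ‖x - z‖ - ‖t • (x - z₀)‖ ≤ ‖(x - z) - t • (x - z₀)‖ := norm_sub_norm_le _ _
  have h2 : ‖t • (x - z₀)‖ = t * ‖x - z₀‖ := by
    rw [norm_smul, Real.norm_eq_abs, abs_of_nonneg ht]
  nlinarith [norm_nonneg (x - z₀), mul_le_mul_of_nonneg_left hx.le ht]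

lemma finite_contraction {n : ℕ} (z : ℕ → Pt n) (r : ℕ → ℝ)
    {t : ℝ} (ht0 : 0 ≤ t) (ht1 : t < 1) (s : Finset ℕ) :
    ENNReal.ofReal ((1 - t) ^ n) * volume (⋃ k ∈ s, ball (z k) (r k)) ≤
      volume (⋃ k ∈ s, ball (z k) ((1 - t) * r k)) := by
  induction s using Finset.strongInduction with
  | _ s ih =>
    rcases s.eq_empty_or_nonempty with rfl | hne
    · simp
    obtain ⟨i₀, hi₀, hmin⟩ := s.exists_min_image r hne
    set s' := s.erase i₀ with hs'
    have hsub : s' ⊂ s := Finset.erase_ssubset hi₀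
    set U' : Set (Pt n) := ⋃ k ∈ s', ball (z k) (r k) with hU'
    set V' : Set (Pt n) := ⋃ k ∈ s', ball (z k) ((1 - t) * r k) with hV'
    set D : Set (Pt n) := ball (z i₀) (r i₀) \ U' with hD
    set h : Pt n → Pt n := fun x => AffineMap.homothety (z i₀) (1 - t) x with hh
    have himg : h '' D ⊆ ball (z i₀) ((1 - t) * r i₀) \ V' := by
      rintro - ⟨x, hxD, rfl⟩
      constructor
      · rw [mem_ball, hh]
        have : dist (AffineMap.homothety (z i₀) (1 - t) x) (z i₀) = |1 - t| * dist x (z i₀) := by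
          simp [AffineMap.homothety_apply, dist_eq_norm, norm_smul, abs_mul]
        rw [this, abs_of_pos (by linarith)]
        have hx0 : dist x (z i₀) < r i₀ := hxD.1
        have h10 : (0:ℝ) < 1 - t := by linarith
        exact (mul_lt_mul_iff_right₀ h10).2 hx0
      · rw [hV']
        simp only [mem_iUnion, not_exists]
        intro k hk
        have hxk : x ∉ ball (z k) (r k) := by
          intro hc
          exact hxD.2 (by rw [hU']; exact mem_iUnion₂.2 ⟨k, hk, hc⟩)
        exact contract_notin ht0 (hmin k (Finset.mem_of_mem_erase hk)) hxD.1 hxk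
    have hUfull : (⋃ k ∈ s, ball (z k) (r k)) ⊆ D ∪ U' := by
      intro x hx
      rw [mem_iUnion₂] at hx
      obtain ⟨k, hk, hxk⟩ := hx
      by_cases hxU : x ∈ U'
      · exact Or.inr hxU
      rcases eq_or_ne k i₀ with rfl | hne'
      · exact Or.inl ⟨hxk, hxU⟩
      · exact absurd (mem_iUnion₂.2 ⟨k, Finset.mem_erase.2 ⟨hne', hk⟩, hxk⟩) hxU
    have hVfull : h '' D ∪ V' ⊆ ⋃ k ∈ s, ball (z k) ((1 - t) * r k) := by
      apply union_subset
      · exact (himg.trans diff_subset).trans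
          (subset_iUnion₂_of_subset i₀ hi₀ subset_rfl)
      · rw [hV']
        exact iUnion₂_mono' fun k hk => ⟨k, Finset.mem_of_mem_erase hk, subset_rfl⟩
    have hVmeas : MeasurableSet V' := by
      rw [hV']
      exact MeasurableSet.biUnion s'.countable_toSet fun k _ => measurableSet_ball
    have hdisj : Disjoint (h '' D) V' := by
      rw [disjoint_left]
      intro a ha
      exact (himg ha).2
    have himgvol : volume (h '' D) = ENNReal.ofReal ((1 - t) ^ n) * volume D := by
      rw [hh]
      have := Measure.addHaar_image_homothety (volume : Measure (Pt n)) (z i₀) (1 - t) D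
      rw [this, finrank_euclideanSpace_fin, abs_of_nonneg (pow_nonneg (by linarith) n)]
    calc ENNReal.ofReal ((1 - t) ^ n) * volume (⋃ k ∈ s, ball (z k) (r k))
        ≤ ENNReal.ofReal ((1 - t) ^ n) * (volume D + volume U') := by
          gcongr
          exact (measure_mono hUfull).trans (measure_union_le _ _)
      _ = volume (h '' D) + ENNReal.ofReal ((1 - t) ^ n) * volume U' := by
          rw [mul_add, himgvol]
      _ ≤ volume (h '' D) + volume V' := by gcongr; exact ih s' hsub
      _ = volume (h '' D ∪ V') := (measure_union hdisj hVmeas).symm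
      _ ≤ volume (⋃ k ∈ s, ball (z k) ((1 - t) * r k)) := measure_mono hVfull

lemma union_contraction {n : ℕ} (z : ℕ → Pt n) (r : ℕ → ℝ)
    {t : ℝ} (ht0 : 0 ≤ t) (ht1 : t < 1) :
    ENNReal.ofReal ((1 - t) ^ n) * volume (⋃ k, ball (z k) (r k)) ≤
      volume (⋃ k, ball (z k) ((1 - t) * r k)) := by
  have acc : volume (⋃ k, ball (z k) (r k)) =
      ⨆ m, volume (⋃ k ∈ Finset.range (m + 1), ball (z k) (r k)) := by
    rw [measure_iUnion_eq_iSup_accumulate]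
    congr 1
    ext m
    congr 1
    ext x
    simp [Set.accumulate_def, Nat.lt_succ_iff]
  rw [acc, ENNReal.mul_iSup]
  refine iSup_le fun m => ?_
  refine (finite_contraction z r ht0 ht1 (Finset.range (m + 1))).trans (measure_mono ?_)
  exact iUnion₂_subset fun k _ => subset_iUnion (fun k => ball (z k) ((1 - t) * r k)) k

lemma weak_type {n : ℕ} (z : ℕ → Pt n) (r : ℕ → ℝ) (R : ℝ) (hr : ∀ k, 0 < r k)
    (hR : ∀ k, r k ≤ R) {E : Set (Pt n)} (hE : MeasurableSet E) {a : ℝ≥0∞} (ha : a ≠ 0)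
    (hw : ∀ k, a * volume (ball (z k) (r k)) ≤ volume (E ∩ ball (z k) (r k))) :
    volume (⋃ k, ball (z k) (r k)) ≤ ENNReal.ofReal (4 ^ n) * a⁻¹ * volume E := by
  obtain ⟨u, -, hdisj, hcov⟩ :=
    Vitali.exists_disjoint_subfamily_covering_enlargement_closedBall (univ : Set ℕ) z r R
      (fun k _ => hR k) 4 (by norm_num)
  have hsub : (⋃ k, ball (z k) (r k)) ⊆ ⋃ b ∈ u, closedBall (z b) (4 * r b) := by
    refine iUnion_subset fun k => ?_
    obtain ⟨b, hb, hsub⟩ := hcov k (mem_univ k)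
    exact (ball_subset_closedBall.trans hsub).trans (subset_iUnion₂_of_subset b hb subset_rfl)
  have hcb : ∀ b : ℕ, volume (closedBall (z b) (4 * r b)) =
      ENNReal.ofReal (4 ^ n) * volume (ball (z b) (r b)) := by
    intro b
    rw [Measure.addHaar_closedBall volume _ (by nlinarith [hr b] : (0:ℝ) ≤ 4 * r b),
      Measure.addHaar_ball_of_pos volume _ (hr b), finrank_euclideanSpace_fin,
      mul_pow, ENNReal.ofReal_mul (by positivity), mul_assoc]
  calc volume (⋃ k, ball (z k) (r k))
      ≤ volume (⋃ b ∈ u, closedBall (z b) (4 * r b)) := measure_mono hsub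
    _ ≤ ∑' b : u, volume (closedBall (z b) (4 * r b)) :=
        measure_biUnion_le volume u.to_countable _
    _ ≤ ∑' b : u, ENNReal.ofReal (4 ^ n) * a⁻¹ * volume (E ∩ ball (z b) (r b)) := by
        refine ENNReal.tsum_le_tsum fun b => ?_
        rw [hcb b, mul_assoc]
        gcongr
        have := hw (b : ℕ)
        rw [mul_comm] at this
        rw [← ENNReal.le_div_iff_mul_le (Or.inl ha) (Or.inr ((measure_mono inter_subset_right).trans_lt measure_ball_lt_top).ne)] at this
        rwa [ENNReal.div_eq_inv_mul] at this
    _ = ENNReal.ofReal (4 ^ n) * a⁻¹ * ∑' b : u, volume (E ∩ ball (z b) (r b)) :=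
        ENNReal.tsum_mul_left
    _ ≤ ENNReal.ofReal (4 ^ n) * a⁻¹ * volume E := by
        gcongr
        rw [← measure_biUnion u.to_countable ?_ (fun b _ => hE.inter measurableSet_ball)]
        · exact measure_mono (iUnion₂_subset fun b _ => inter_subset_left)
        · exact hdisj.mono fun b => inter_subset_right.trans ball_subset_closedBall

lemma two_mul_trick {a b : ℝ≥0∞} (hfin : a ≠ ⊤) (h : a ≤ b + a / 2) : a ≤ 2 * b := by
  have h2 : a - a / 2 ≤ b := by
    rw [tsub_le_iff_right]
    exact h
  rw [ENNReal.sub_half hfin] at h2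
  calc a = 2 * (a / 2) := by rw [ENNReal.mul_div_cancel' (by norm_num) (by norm_num)]
    _ ≤ 2 * b := by gcongr

lemma besicovitch_est {n : ℕ} {N : ℕ} {τ : ℝ} (hτ : 1 < τ)
    (hno : IsEmpty (Besicovitch.SatelliteConfig (Pt n) N τ))
    {E : Set (Pt n)} (hE : MeasurableSet E) {S : Set (Pt n)} (hSE : Disjoint S E)
    {η : ℝ≥0∞} (hη : η ≤ 1 / 2) (Rb : ℝ) (ρ : Pt n → ℝ)
    (hρ0 : ∀ x ∈ S, 0 < ρ x) (hρR : ∀ x ∈ S, ρ x ≤ Rb)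
    (hρE : ∀ x ∈ S, volume (ball x (ρ x) \ E) ≤ η * volume (ball x (ρ x))) :
    volume S ≤ (N : ℝ≥0∞) * (2 * η * volume E) := by
  rcases S.eq_empty_or_nonempty with rfl | hSne
  · simp
  have hRb : 0 < Rb := lt_of_lt_of_le (hρ0 _ hSne.choose_spec) (hρR _ hSne.choose_spec)
  set q : Besicovitch.BallPackage ↥S (Pt n) :=
    { c := Subtype.val
      r := fun b => ρ b
      rpos := fun b => hρ0 b b.2
      r_bound := Rb
      r_le := fun b => hρR b b.2 } with hq
  obtain ⟨s, hsd, hscov⟩ := Besicovitch.exist_disjoint_covering_families hτ hno q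
  have hcov : S ⊆ ⋃ i : Fin N, ⋃ j ∈ s i, ball (j : Pt n) (ρ (j : Pt n)) := by
    intro x hx
    have : x ∈ range q.c := ⟨⟨x, hx⟩, rfl⟩
    exact hscov this
  have key : ∀ i : Fin N, volume (S ∩ ⋃ j ∈ s i, ball (j : Pt n) (ρ (j : Pt n))) ≤
      2 * η * volume E := by
    intro i
    have hcnt : (s i).Countable := by
      refine Set.PairwiseDisjoint.countable_of_isOpen
        ((hsd i).mono fun j => ball_subset_closedBall) (fun j _ => isOpen_ball) ?_
      exact fun j _ => nonempty_ball.2 (hρ0 j j.2)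
    have hball2 : ∀ j : ↥S, volume (ball (j : Pt n) (ρ (j : Pt n))) ≤
        2 * volume (E ∩ ball (j : Pt n) (ρ (j : Pt n))) := by
      intro j
      refine two_mul_trick measure_ball_lt_top.ne ?_
      have heq : volume (ball (j : Pt n) (ρ j)) =
          volume (E ∩ ball (j : Pt n) (ρ j)) + volume (ball (j : Pt n) (ρ j) \ E) := by
        rw [inter_comm]
        exact (measure_inter_add_diff _ hE).symm
      calc volume (ball (j : Pt n) (ρ j))
          = volume (E ∩ ball (j : Pt n) (ρ j)) + volume (ball (j : Pt n) (ρ j) \ E) := heq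
        _ ≤ volume (E ∩ ball (j : Pt n) (ρ j)) + volume (ball (j : Pt n) (ρ j)) / 2 := by
            gcongr
            calc volume (ball (j : Pt n) (ρ j) \ E) ≤ η * volume (ball (j : Pt n) (ρ j)) :=
                  hρE j j.2
              _ ≤ 2⁻¹ * volume (ball (j : Pt n) (ρ j)) := by
                  gcongr
                  simpa [one_div] using hη
              _ = volume (ball (j : Pt n) (ρ j)) / 2 := by rw [ENNReal.div_eq_inv_mul]
    calc volume (S ∩ ⋃ j ∈ s i, ball (j : Pt n) (ρ (j : Pt n)))
        = volume (⋃ j ∈ s i, S ∩ ball (j : Pt n) (ρ (j : Pt n))) := by rw [inter_iUnion₂]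
      _ ≤ ∑' j : s i, volume (S ∩ ball (j : Pt n) (ρ (j : Pt n))) :=
          measure_biUnion_le volume hcnt _
      _ ≤ ∑' j : s i, 2 * η * volume (E ∩ ball (j : Pt n) (ρ (j : Pt n))) := by
          refine ENNReal.tsum_le_tsum fun j => ?_
          calc volume (S ∩ ball ((j:↥S) : Pt n) (ρ ((j:↥S) : Pt n)))
              ≤ volume (ball ((j:↥S) : Pt n) (ρ ((j:↥S) : Pt n)) \ E) := by
                refine measure_mono fun y hy => ⟨hy.2, fun hyE => ?_⟩
                exact hSE.ne_of_mem hy.1 hyE rfl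
            _ ≤ η * volume (ball ((j:↥S) : Pt n) (ρ ((j:↥S) : Pt n))) := hρE _ (j:↥S).2
            _ ≤ η * (2 * volume (E ∩ ball ((j:↥S) : Pt n) (ρ ((j:↥S) : Pt n)))) := by
                gcongr; exact hball2 _
            _ = 2 * η * volume (E ∩ ball ((j:↥S) : Pt n) (ρ ((j:↥S) : Pt n))) := by ring
      _ = 2 * η * ∑' j : s i, volume (E ∩ ball (j : Pt n) (ρ (j : Pt n))) :=
          ENNReal.tsum_mul_left
      _ ≤ 2 * η * volume E := by
          gcongr
          calc ∑' j : s i, volume (E ∩ ball (j : Pt n) (ρ (j : Pt n)))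
              = volume (⋃ j ∈ s i, E ∩ ball (j : Pt n) (ρ (j : Pt n))) :=
                (measure_biUnion hcnt ((hsd i).mono fun j =>
                  inter_subset_right.trans ball_subset_closedBall)
                  (fun j _ => hE.inter measurableSet_ball)).symm
            _ ≤ volume E := measure_mono (iUnion₂_subset fun j _ => inter_subset_left)
  calc volume S ≤ volume (⋃ i : Fin N, S ∩ ⋃ j ∈ s i, ball (j : Pt n) (ρ (j : Pt n))) := by
        refine measure_mono fun x hx => ?_
        obtain ⟨i, hi⟩ := mem_iUnion.1 (hcov hx)
        exact mem_iUnion.2 ⟨i, hx, hi⟩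
    _ ≤ ∑ i : Fin N, volume (S ∩ ⋃ j ∈ s i, ball (j : Pt n) (ρ (j : Pt n))) :=
        measure_iUnion_fintype_le _ _
    _ ≤ ∑ _i : Fin N, 2 * η * volume E := Finset.sum_le_sum fun i _ => key i
    _ = (N : ℝ≥0∞) * (2 * η * volume E) := by
        rw [Finset.sum_const, Finset.card_univ, Fintype.card_fin, nsmul_eq_mul]

lemma main_bound {n N : ℕ} {τ : ℝ} (hn : 1 ≤ n) (hτ : 1 < τ)
    (hno : IsEmpty (Besicovitch.SatelliteConfig (Pt n) N τ))
    {E : Set (Pt n)} (hE : MeasurableSet E) (hEfin : volume E < ⊤)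
    {α t : ℝ} (hα2 : 1 / 2 ≤ α) (hα1 : α < 1) (ht0 : 0 < t) (ht1 : t < 1 / 2)
    (hηhalf : (1 - α) / t ^ n ≤ 1 / 2) :
    volume {x | MHLb n (E.indicator 1) x > ENNReal.ofReal α} ≤
      (1 + ENNReal.ofReal (n * t * (2 * 4 ^ n))
        + (N : ℝ≥0∞) * (2 * ENNReal.ofReal ((1 - α) / t ^ n))) * volume E := by
  classical
  set ω := volume (ball (0 : Pt n) 1) with hω
  have hα0 : (0:ℝ) < α := by linarith
  have hane : ENNReal.ofReal α ≠ 0 := by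
    simp [ENNReal.ofReal_eq_zero, not_le, hα0]
  set A := {x | MHLb n (E.indicator 1) x > ENNReal.ofReal α} with hAdef
  rcases eq_empty_or_nonempty A with hAe | hAne
  · rw [hAe]
    simp
  -- A as a union of witness balls
  set W : Set (Pt n × ℝ) := {p | 0 < p.2 ∧
    ENNReal.ofReal α * volume (ball p.1 p.2) < volume (E ∩ ball p.1 p.2)} with hW
  have hAu : A = ⋃ p : W, ball (p : Pt n × ℝ).1 (p : Pt n × ℝ).2 := by
    ext x
    rw [hAdef, mem_setOf, mem_A_iff hE x, mem_iUnion]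
    constructor
    · rintro ⟨z, r, h1, h2, h3⟩
      exact ⟨⟨(z, r), ⟨h1, h3⟩⟩, h2⟩
    · rintro ⟨⟨⟨z, r⟩, hp⟩, hx⟩
      exact ⟨z, r, hp.1, hx, hp.2⟩
  obtain ⟨T, hTc, hTU⟩ := TopologicalSpace.isOpen_iUnion_countable
    (fun p : W => ball (p : Pt n × ℝ).1 (p : Pt n × ℝ).2) (fun p => isOpen_ball)
  have hTne : T.Nonempty := by
    rcases hAne with ⟨x, hx⟩
    rw [hAu, ← hTU] at hx
    obtain ⟨p, hp⟩ := mem_iUnion.1 hx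
    obtain ⟨hpT, -⟩ := mem_iUnion.1 hp
    exact ⟨p, hpT⟩
  obtain ⟨f, hf⟩ := (hTc.exists_eq_range hTne)
  set z : ℕ → Pt n := fun k => ((f k : W) : Pt n × ℝ).1 with hz
  set r : ℕ → ℝ := fun k => ((f k : W) : Pt n × ℝ).2 with hr
  have hrk : ∀ k, 0 < r k := fun k => ((f k : W).2).1
  have hwit : ∀ k, ENNReal.ofReal α * volume (ball (z k) (r k)) <
      volume (E ∩ ball (z k) (r k)) := fun k => ((f k : W).2).2
  have hA2 : A = ⋃ k, ball (z k) (r k) := by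
    rw [hAu, ← hTU, hf]
    ext x
    simp only [mem_iUnion]
    constructor
    · rintro ⟨p, ⟨k, rfl⟩, hx⟩
      exact ⟨k, hx⟩
    · rintro ⟨k, hx⟩
      exact ⟨f k, ⟨k, rfl⟩, hx⟩
  -- bound on radii
  have hωpos : 0 < ω := measure_ball_pos volume _ one_pos
  have hωfin : ω < ⊤ := measure_ball_lt_top
  set c : ℝ≥0∞ := volume E / (ENNReal.ofReal α * ω) with hc
  have hcfin : c ≠ ⊤ := by
    rw [hc]
    exact (ENNReal.div_lt_top hEfin.ne (by simp [hane, hωpos.ne'])).ne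
  set R : ℝ := max 1 c.toReal with hR
  have hRbound : ∀ k, r k ≤ R := by
    intro k
    by_contra hcon
    push_neg at hcon
    have h1r : (1:ℝ) < r k := lt_of_le_of_lt (le_max_left _ _) hcon
    have hballvol : volume (ball (z k) (r k)) = ENNReal.ofReal (r k ^ n) * ω := by
      rw [Measure.addHaar_ball_of_pos volume _ (hrk k), finrank_euclideanSpace_fin, hω]
    have hle : ENNReal.ofReal α * (ENNReal.ofReal (r k ^ n) * ω) ≤ volume E := by
      rw [← hballvol]
      exact le_trans (hwit k).le (measure_mono inter_subset_left)
    have : ENNReal.ofReal (r k ^ n) ≤ c := by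
      rw [hc, ENNReal.le_div_iff_mul_le (Or.inl (by simp [hane, hωpos.ne']))
        (Or.inl (ENNReal.mul_ne_top ENNReal.ofReal_ne_top hωfin.ne))]
      calc ENNReal.ofReal (r k ^ n) * (ENNReal.ofReal α * ω)
          = ENNReal.ofReal α * (ENNReal.ofReal (r k ^ n) * ω) := by ring
        _ ≤ volume E := hle
    have hrn : r k ^ n ≤ c.toReal := by
      rw [← ENNReal.ofReal_le_iff_le_toReal hcfin] at *
      exact this
    have : r k ≤ c.toReal := le_trans (le_self_pow₀ h1r.le (by omega)) hrn
    exact absurd (le_trans this (le_max_right 1 _)) (not_le.2 hcon)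
  -- weak type bound
  have h12 : ENNReal.ofReal (1/2 : ℝ) = 2⁻¹ := by
    rw [one_div, ENNReal.ofReal_inv_of_pos two_pos, ENNReal.ofReal_ofNat]
  have hwt : volume A ≤ ENNReal.ofReal (2 * 4 ^ n) * volume E := by
    rw [hA2]
    refine (weak_type z r R hrk hRbound hE hane fun k => (hwit k).le).trans ?_
    have hinv : (ENNReal.ofReal α)⁻¹ ≤ 2 := by
      calc (ENNReal.ofReal α)⁻¹ ≤ (ENNReal.ofReal (1/2 : ℝ))⁻¹ :=
            ENNReal.inv_le_inv' (ENNReal.ofReal_le_ofReal hα2)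
        _ = 2 := by rw [h12, inv_inv]
    calc ENNReal.ofReal (4 ^ n) * (ENNReal.ofReal α)⁻¹ * volume E
        ≤ ENNReal.ofReal (4 ^ n) * 2 * volume E := by gcongr
      _ = ENNReal.ofReal (2 * 4 ^ n) * volume E := by
          rw [ENNReal.ofReal_mul (by norm_num), ENNReal.ofReal_ofNat, mul_comm (ENNReal.ofReal (4^n))]
  have hAfin : volume A < ⊤ :=
    lt_of_le_of_lt hwt (ENNReal.mul_lt_top ENNReal.ofReal_lt_top hEfin)
  -- the contracted union
  set B : Set (Pt n) := ⋃ k, ball (z k) ((1 - t) * r k) with hB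
  have hBA : B ⊆ A := by
    rw [hA2, hB]
    refine iUnion_mono fun k => ball_subset_ball ?_
    nlinarith [hrk k]
  have hBmeas : MeasurableSet B := MeasurableSet.iUnion fun k => measurableSet_ball
  have hcontr : ENNReal.ofReal ((1 - t) ^ n) * volume A ≤ volume B := by
    rw [hA2, hB]
    exact union_contraction z r ht0.le (by linarith)
  have hdiff : volume (A \ B) ≤ ENNReal.ofReal (n * t * (2 * 4 ^ n)) * volume E := by
    have h1 : volume (A \ B) = volume A - volume B :=
      measure_diff hBA hBmeas.nullMeasurableSet (lt_of_le_of_lt (measure_mono hBA) hAfin).ne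
    have h2 : volume A - volume B ≤ volume A - ENNReal.ofReal ((1 - t) ^ n) * volume A :=
      tsub_le_tsub_left hcontr _
    have h3 : volume A - ENNReal.ofReal ((1 - t) ^ n) * volume A
        = (1 - ENNReal.ofReal ((1 - t) ^ n)) * volume A := by
      rw [ENNReal.sub_mul (fun _ _ => hAfin.ne), one_mul]
    have h4 : (1 : ℝ≥0∞) - ENNReal.ofReal ((1 - t) ^ n) = ENNReal.ofReal (1 - (1 - t) ^ n) := by
      rw [ENNReal.ofReal_sub _ (pow_nonneg (by linarith) n), ENNReal.ofReal_one]
    have h5 : (1 : ℝ) - (1 - t) ^ n ≤ n * t := by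
      have hb := one_add_mul_le_pow (a := -t) (by linarith) n
      have : 1 + (n : ℝ) * (-t) = 1 - n * t := by ring
      rw [this] at hb
      have : 1 + -t = 1 - t := by ring
      rw [this] at hb
      linarith
    calc volume (A \ B) ≤ (1 - ENNReal.ofReal ((1 - t) ^ n)) * volume A := by
          rw [h1, ← h3]; exact h2
      _ = ENNReal.ofReal (1 - (1 - t) ^ n) * volume A := by rw [h4]
      _ ≤ ENNReal.ofReal (n * t) * (ENNReal.ofReal (2 * 4 ^ n) * volume E) :=
          mul_le_mul' (ENNReal.ofReal_le_ofReal h5) hwt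
      _ = ENNReal.ofReal (n * t * (2 * 4 ^ n)) * volume E := by
          rw [← mul_assoc, ← ENNReal.ofReal_mul (by positivity)]
  -- the Besicovitch part
  set S : Set (Pt n) := B \ E with hS
  have hSE : Disjoint S E := disjoint_sdiff_left
  have hsel : ∀ x : Pt n, ∃ k : ℕ, x ∈ S → x ∈ ball (z k) ((1 - t) * r k) := by
    intro x
    by_cases hx : x ∈ S
    · obtain ⟨k, hk⟩ := mem_iUnion.1 hx.1
      exact ⟨k, fun _ => hk⟩
    · exact ⟨0, fun h => absurd h hx⟩
  choose g hg using hsel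
  set ρ : Pt n → ℝ := fun x => t * r (g x) with hρ
  have hρ0 : ∀ x ∈ S, 0 < ρ x := fun x _ => mul_pos ht0 (hrk (g x))
  have hρR : ∀ x ∈ S, ρ x ≤ t * R := fun x _ =>
    mul_le_mul_of_nonneg_left (hRbound (g x)) ht0.le
  have hη0 : (0:ℝ) ≤ (1 - α) / t ^ n := div_nonneg (by linarith) (by positivity)
  have hquality : ∀ x ∈ S, volume (ball x (ρ x) \ E) ≤
      ENNReal.ofReal ((1 - α) / t ^ n) * volume (ball x (ρ x)) := by
    intro x hx
    have hxb := hg x hx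
    set k := g x with hk
    have hsub : ball x (ρ x) ⊆ ball (z k) (r k) := by
      apply ball_subset_ball'
      have hd : dist x (z k) < (1 - t) * r k := mem_ball.1 hxb
      have : ρ x = t * r k := rfl
      nlinarith [hrk k]
    have hBE : volume (ball (z k) (r k) \ E) ≤
        ENNReal.ofReal (1 - α) * volume (ball (z k) (r k)) := by
      have hsum : volume (ball (z k) (r k) \ E) + volume (ball (z k) (r k) ∩ E) =
          volume (ball (z k) (r k)) := measure_diff_add_inter _ hE
      have hlow : ENNReal.ofReal α * volume (ball (z k) (r k)) ≤
          volume (ball (z k) (r k) ∩ E) := by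
        rw [inter_comm]
        exact (hwit k).le
      have hdfin : volume (ball (z k) (r k) ∩ E) ≠ ⊤ :=
        ((measure_mono inter_subset_left).trans_lt measure_ball_lt_top).ne
      have heq : volume (ball (z k) (r k) \ E) =
          volume (ball (z k) (r k)) - volume (ball (z k) (r k) ∩ E) :=
        ENNReal.eq_sub_of_add_eq hdfin hsum
      calc volume (ball (z k) (r k) \ E)
          ≤ volume (ball (z k) (r k)) - ENNReal.ofReal α * volume (ball (z k) (r k)) := by
            rw [heq]; exact tsub_le_tsub_left hlow _
        _ = (1 - ENNReal.ofReal α) * volume (ball (z k) (r k)) := by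
            rw [ENNReal.sub_mul (fun _ _ => measure_ball_lt_top.ne), one_mul]
        _ = ENNReal.ofReal (1 - α) * volume (ball (z k) (r k)) := by
            rw [ENNReal.ofReal_sub _ hα0.le, ENNReal.ofReal_one]
    have hvolsmall : volume (ball x (ρ x)) = ENNReal.ofReal ((t * r k) ^ n) * ω := by
      rw [show ρ x = t * r k from rfl, Measure.addHaar_ball_of_pos volume _
        (mul_pos ht0 (hrk k)), finrank_euclideanSpace_fin, hω]
    have hvolbig : volume (ball (z k) (r k)) = ENNReal.ofReal (r k ^ n) * ω := by
      rw [Measure.addHaar_ball_of_pos volume _ (hrk k), finrank_euclideanSpace_fin, hω]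
    have hreal : (1 - α) * r k ^ n = (1 - α) / t ^ n * (t * r k) ^ n := by
      rw [mul_pow]
      field_simp
    calc volume (ball x (ρ x) \ E) ≤ volume (ball (z k) (r k) \ E) :=
          measure_mono (diff_subset_diff_left hsub)
      _ ≤ ENNReal.ofReal (1 - α) * volume (ball (z k) (r k)) := hBE
      _ = ENNReal.ofReal ((1 - α) * r k ^ n) * ω := by
          rw [hvolbig, ← mul_assoc, ← ENNReal.ofReal_mul (by linarith)]
      _ = ENNReal.ofReal ((1 - α) / t ^ n * (t * r k) ^ n) * ω := by rw [hreal]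
      _ = ENNReal.ofReal ((1 - α) / t ^ n) * volume (ball x (ρ x)) := by
          rw [hvolsmall, ← mul_assoc, ← ENNReal.ofReal_mul hη0]
  have hηE : ENNReal.ofReal ((1 - α) / t ^ n) ≤ 1 / 2 := by
    have := ENNReal.ofReal_le_ofReal hηhalf
    rwa [h12, ← one_div] at this
  have hbesi : volume S ≤ (N : ℝ≥0∞) * (2 * ENNReal.ofReal ((1 - α) / t ^ n) * volume E) :=
    besicovitch_est hτ hno hE hSE hηE (t * R) ρ hρ0 hρR hquality
  -- assembly
  have hsplit : A ⊆ (A ∩ E) ∪ ((A \ B) ∪ S) := by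
    intro x hx
    by_cases hxE : x ∈ E
    · exact Or.inl ⟨hx, hxE⟩
    by_cases hxB : x ∈ B
    · exact Or.inr (Or.inr ⟨hxB, hxE⟩)
    · exact Or.inr (Or.inl ⟨hx, hxB⟩)
  calc volume A ≤ volume (A ∩ E) + (volume (A \ B) + volume S) := by
        refine (measure_mono hsplit).trans ?_
        refine (measure_union_le _ _).trans ?_
        gcongr
        exact measure_union_le _ _
    _ ≤ volume E + (ENNReal.ofReal (n * t * (2 * 4 ^ n)) * volume E
        + (N : ℝ≥0∞) * (2 * ENNReal.ofReal ((1 - α) / t ^ n) * volume E)) := by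
        exact add_le_add (measure_mono inter_subset_right) (add_le_add hdiff hbesi)
    _ = (1 + ENNReal.ofReal (n * t * (2 * 4 ^ n))
        + (N : ℝ≥0∞) * (2 * ENNReal.ofReal ((1 - α) / t ^ n))) * volume E := by
        ring

lemma one_le_CHLb (n : ℕ) (hn : 1 ≤ n) {α : ℝ} (hα : α < 1) : 1 ≤ CHLb n α := by
  set E := ball (0 : Pt n) 1 with hEdef
  have hE : MeasurableSet E := measurableSet_ball
  have hE0 : 0 < volume E := measure_ball_pos volume _ one_pos
  have hEfin : volume E < ⊤ := measure_ball_lt_top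
  have hsub : E ⊆ {x | MHLb n (E.indicator 1) x > ENNReal.ofReal α} := by
    intro x hx
    rw [mem_setOf, mem_A_iff hE x]
    refine ⟨0, 1, one_pos, hx, ?_⟩
    rw [← hEdef, inter_self]
    calc ENNReal.ofReal α * volume E < 1 * volume E := by
          rw [ENNReal.mul_lt_mul_iff_left hE0.ne' hEfin.ne]
          exact ENNReal.ofReal_lt_one.2 hα
      _ = volume E := one_mul _
  calc (1 : ℝ≥0∞) = volume E / volume E := (ENNReal.div_self hE0.ne' hEfin.ne).symm
    _ ≤ volume {x | MHLb n (E.indicator 1) x > ENNReal.ofReal α} / volume E := by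
        gcongr
    _ ≤ CHLb n α := by
        rw [CHLb]
        exact le_iSup_of_le E (le_iSup_of_le hE (le_iSup_of_le hE0 (le_iSup_of_le hEfin le_rfl)))

set_option maxHeartbeats 1000000 in
lemma CHLb_le (n : ℕ) (hn : 1 ≤ n) {ε : ℝ} (hε0 : 0 < ε) (hε1 : ε ≤ 1) :
    ∃ δ₀ : ℝ, 0 < δ₀ ∧ ∀ α : ℝ, 1 - δ₀ < α → α < 1 →
      CHLb n α ≤ 1 + ENNReal.ofReal ε := by
  obtain ⟨N, τ, hτ, hno⟩ := HasBesicovitchCovering.no_satelliteConfig (α := Pt n)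
  have h4n : (4:ℝ) ≤ 4 ^ n := by
    calc (4:ℝ) = 4 ^ 1 := (pow_one 4).symm
      _ ≤ 4 ^ n := pow_le_pow_right₀ (by norm_num) hn
  have hn1 : (1:ℝ) ≤ n := by exact_mod_cast hn
  set D : ℝ := n * (4 * (2 * 4 ^ n)) + 1 with hD
  have hDpos : 0 < D := by nlinarith
  set t : ℝ := ε / D with ht
  have ht0 : 0 < t := div_pos hε0 hDpos
  have htD : t * D = ε := div_mul_cancel₀ ε hDpos.ne'
  have ht12 : t < 1 / 2 := by
    rw [ht, div_lt_iff₀ hDpos]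
    nlinarith
  have hhalf : n * t * (2 * 4 ^ n) ≤ ε / 2 := by nlinarith
  have htn : (0:ℝ) < t ^ n := pow_pos ht0 n
  set m : ℝ := min (1/2) (ε / (4 * N + 4)) with hm
  have hm0 : 0 < m := lt_min (by norm_num) (by positivity)
  set δ₀ : ℝ := t ^ n * m with hδ₀
  refine ⟨δ₀, mul_pos htn hm0, ?_⟩
  intro α hαδ hα1
  have hδα : 1 - α < δ₀ := by linarith
  have htn1 : t ^ n ≤ t := by
    calc t ^ n ≤ t ^ 1 := pow_le_pow_of_le_one ht0.le (by linarith) hn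
      _ = t := pow_one t
  have hδhalf : δ₀ ≤ 1 / 2 := by
    have : m ≤ 1/2 := min_le_left _ _
    nlinarith
  have hα2 : 1 / 2 ≤ α := by linarith
  have hηhalf : (1 - α) / t ^ n ≤ 1 / 2 := by
    rw [div_le_iff₀ htn]
    have : δ₀ ≤ t ^ n * (1/2) := by
      have : m ≤ 1/2 := min_le_left _ _
      nlinarith
    nlinarith
  have hηeps : (1 - α) / t ^ n ≤ ε / (4 * N + 4) := by
    rw [div_le_iff₀ htn]
    have hm2 : m ≤ ε / (4 * N + 4) := min_le_right _ _
    have : δ₀ ≤ t ^ n * (ε / (4 * N + 4)) := by nlinarith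
    nlinarith
  -- coefficient bound
  have hcoef : (1 + ENNReal.ofReal (n * t * (2 * 4 ^ n))
      + (N : ℝ≥0∞) * (2 * ENNReal.ofReal ((1 - α) / t ^ n))) ≤ 1 + ENNReal.ofReal ε := by
    have hNterm : (N : ℝ≥0∞) * (2 * ENNReal.ofReal ((1 - α) / t ^ n)) ≤
        ENNReal.ofReal (ε / 2) := by
      calc (N : ℝ≥0∞) * (2 * ENNReal.ofReal ((1 - α) / t ^ n))
          = ENNReal.ofReal ((N : ℝ) * (2 * ((1 - α) / t ^ n))) := by
            rw [ENNReal.ofReal_mul (by positivity), ENNReal.ofReal_mul (by norm_num),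
              ENNReal.ofReal_natCast, ENNReal.ofReal_ofNat]
        _ ≤ ENNReal.ofReal (ε / 2) := by
            apply ENNReal.ofReal_le_ofReal
            have hq : (1 - α) / t ^ n ≤ ε / (4 * N + 4) := hηeps
            have hN0 : (0:ℝ) ≤ N := Nat.cast_nonneg N
            have h2 : (N:ℝ) * (2 * ((1 - α) / t ^ n)) ≤ (N:ℝ) * (2 * (ε / (4*N+4))) :=
              mul_le_mul_of_nonneg_left (by linarith) hN0
            have h3 : (N:ℝ) * (2 * (ε / (4*N+4))) = ε * (2*N / (4*N+4)) := by ring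
            have h4 : 2*(N:ℝ) / (4*N+4) ≤ 1/2 := by
              rw [div_le_div_iff₀ (by positivity) (by norm_num : (0:ℝ) < 2)]
              linarith
            have h5 : ε * (2*N / (4*N+4)) ≤ ε * (1/2) :=
              mul_le_mul_of_nonneg_left h4 hε0.le
            calc (N:ℝ) * (2 * ((1 - α) / t ^ n)) ≤ ε * (2*N/(4*N+4)) := by rw [← h3]; exact h2
              _ ≤ ε * (1/2) := h5
              _ = ε / 2 := by ring
    calc 1 + ENNReal.ofReal (n * t * (2 * 4 ^ n))
        + (N : ℝ≥0∞) * (2 * ENNReal.ofReal ((1 - α) / t ^ n))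
        ≤ 1 + ENNReal.ofReal (ε / 2) + ENNReal.ofReal (ε / 2) :=
          add_le_add (add_le_add le_rfl (ENNReal.ofReal_le_ofReal hhalf)) hNterm
      _ = 1 + ENNReal.ofReal ε := by
          rw [add_assoc, ← ENNReal.ofReal_add (by positivity) (by positivity)]
          norm_num
  rw [CHLb]
  refine iSup_le fun E => iSup_le fun hE => iSup_le fun hE0 => iSup_le fun hEfin => ?_
  rw [ENNReal.div_le_iff_le_mul (Or.inl hE0.ne') (Or.inl hEfin.ne)]
  calc volume {x | MHLb n (E.indicator 1) x > ENNReal.ofReal α}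
      ≤ (1 + ENNReal.ofReal (n * t * (2 * 4 ^ n))
        + (N : ℝ≥0∞) * (2 * ENNReal.ofReal ((1 - α) / t ^ n))) * volume E :=
        main_bound hn hτ hno hE hEfin hα2 hα1 ht0 ht12 hηhalf
    _ ≤ (1 + ENNReal.ofReal ε) * volume E := mul_le_mul_left hcoef _

end SolyanikAux

theorem uncentered_ball_solyanik (n : ℕ) (hn : 1 ≤ n) :
    Filter.Tendsto (CHLb n) (nhdsWithin 1 (Set.Iio 1)) (nhds 1) := by
  rw [ENNReal.tendsto_nhds (by norm_num : (1:ℝ≥0∞) ≠ ⊤)]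
  intro ε hε
  set e := min ε 1 with he
  have he0 : 0 < e := lt_min hε zero_lt_one
  have hefin : e ≠ ⊤ := (lt_of_le_of_lt (min_le_right _ _) (by norm_num)).ne
  have her0 : 0 < e.toReal := ENNReal.toReal_pos he0.ne' hefin
  have her1 : e.toReal ≤ 1 := by
    have h1 : e ≤ 1 := min_le_right _ _
    calc e.toReal ≤ (1:ℝ≥0∞).toReal := ENNReal.toReal_mono (by norm_num) h1
      _ = 1 := by simp
  obtain ⟨δ₀, hδ₀, hbound⟩ := CHLb_le n hn her0 her1
  have hmem : Ioo (1 - δ₀) 1 ∈ nhdsWithin (1:ℝ) (Set.Iio 1) :=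
    Ioo_mem_nhdsLT_of_mem ⟨by linarith, le_rfl⟩
  filter_upwards [hmem] with α hα
  constructor
  · calc 1 - ε ≤ 1 := tsub_le_self
      _ ≤ CHLb n α := one_le_CHLb n hn hα.2
  · calc CHLb n α ≤ 1 + ENNReal.ofReal e.toReal := hbound α hα.1 hα.2
      _ = 1 + e := by rw [ENNReal.ofReal_toReal hefin]
      _ ≤ 1 + ε := add_le_add le_rfl (min_le_left _ _)
end
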